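/- arXiv:1602.03554 — 4 statements merged into one kernel-verified Lean document; each statement's English description precedes it below -/
import Mathlib

section
/- In the free associative conformal algebra C(B, N), for any n ≥ 0, any u ∈ T, and any f ∈ C(B, N), the leading word of f_{(n)}[u] is at most \bar{f}^{\D} ♮ u in the weight ordering. -/
/-!  Basic definitions for (associative) conformal algebras, the free
associative conformal algebra `C(B,N)`, normal words, the weight ordering,
normal `S`-words, compositions and Gröbner–Shirshov bases, following
Ni–Chen, "A new Composition-Diamond lemma for associative conformal algebras". -/

universe u v w

open scoped BigOperators

/-- A conformal algebra over a field `K`. -/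
structure ConformalAlgebra (K : Type u) [Field K] (C : Type w)
    [AddCommGroup C] [Module K C] where
  mul : ℕ → C →ₗ[K] C →ₗ[K] C
  D : C →ₗ[K] C
  locality : ∀ a b : C, ∃ N : ℕ, ∀ n : ℕ, N ≤ n → mul n a b = 0
  leibniz : ∀ (n : ℕ) (a b : C), D (mul n a b) = mul n (D a) b + mul n a (D b)
  D_mul : ∀ (n : ℕ) (a b : C), 0 < n → mul n (D a) b = -((n : K) • mul (n - 1) a b)
  D_mul_zero : ∀ a b : C, mul 0 (D a) b = 0

/-- An associative conformal algebra. -/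
structure AssocConformalAlgebra (K : Type u) [Field K] (C : Type w)
    [AddCommGroup C] [Module K C] extends ConformalAlgebra K C where
  assoc : ∀ (n m : ℕ) (a b c : C),
    mul m (mul n a b) c =
      ∑ t ∈ Finset.range (n + 1),
        ((-1 : K) ^ t * (n.choose t : K)) • mul (n - t) a (mul (m + t) b c)

variable {K : Type u} [Field K] {C : Type w} [AddCommGroup C] [Module K C]

/-- The conjugate sum `{y_(n) x} = Σ_{m≥0} (-1)^{n+m} (1/m!) D^m (f (n+m) y x)`;
a finite sum by locality. -/
noncomputable def conjOp (D : C →ₗ[K] C) (f : ℕ → C → C → C) (n : ℕ) (y x : C) : C :=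
  ∑ᶠ m : ℕ, ((-1 : K) ^ (n + m) * ((m.factorial : K))⁻¹) • (D ^ m) (f (n + m) y x)

/-- The conformal commutator `x_[n] y = x_(n) y − {y_(n) x}`. -/
noncomputable def cBracket (A : AssocConformalAlgebra K C) (n : ℕ) (x y : C) : C :=
  A.mul n x y - conjOp A.D (fun m u v => A.mul m u v) n y x

/-- An associative normal word `b₁_(n₁) ⋯ b_k_(n_k) D^i b_{k+1}`. -/
structure NormalWord (B : Type v) (N : ℕ) where
  body : List (B × Fin N)
  last : B
  exp : ℕ

namespace NormalWord

variable {B : Type v} {N : ℕ}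

/-- `u D^i` : raise the final `D`-exponent by `i`. -/
def shiftD (u : NormalWord B N) (i : ℕ) : NormalWord B N := ⟨u.body, u.last, u.exp + i⟩

/-- Concatenation `a_(n) u` of a `D`-free word `a` with `u`. -/
def concat (u : NormalWord B N) (n : Fin N) (v : NormalWord B N) : NormalWord B N :=
  ⟨u.body ++ (u.last, n) :: v.body, v.last, v.exp⟩

/-- `u^{\D} ♮ v` : drop the final `D`-exponent of `u` and concatenate with `v`,
all junction indices being `N − 1`. -/
def natMul (u v : NormalWord B N) (hN : 0 < N) : NormalWord B N :=
  ⟨u.body ++ (u.last, ⟨N - 1, Nat.sub_lt hN one_pos⟩) ::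
      v.body.map (fun p => (p.1, (⟨N - 1, Nat.sub_lt hN one_pos⟩ : Fin N))),
    v.last, v.exp⟩

end NormalWord

/-- The strict weight ordering on associative normal words: compare lengths,
then the body lexicographically, then the last letter, then the `D`-exponent. -/
def wtLT {B : Type v} {N : ℕ} (r : B → B → Prop) (u v : NormalWord B N) : Prop :=
  u.body.length < v.body.length ∨
    (u.body.length = v.body.length ∧
      (List.Lex (Prod.Lex r (· < ·)) u.body v.body ∨
        (u.body = v.body ∧ (r u.last v.last ∨ (u.last = v.last ∧ u.exp < v.exp)))))

def wtLE {B : Type v} {N : ℕ} (r : B → B → Prop) (u v : NormalWord B N) : Prop :=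
  wtLT r u v ∨ u = v

/-- Words on the alphabet `D^ω(B) = {D^i b}`. -/
inductive CWord (B : Type v) : Type v
  | gen : B → ℕ → CWord B
  | mul : ℕ → CWord B → CWord B → CWord B

/-- Length of a word. -/
def CWord.length {B : Type v} : CWord B → ℕ
  | .gen _ _ => 1
  | .mul _ u v => u.length + v.length

/-- The free associative conformal algebra `C(B,N)` generated by `B` with
uniformly bounded locality `N`, axiomatized by its universal property. -/
structure FreeAssocConformal (K : Type u) [Field K] (B : Type v) (N : ℕ)
    (C : Type w) [AddCommGroup C] [Module K C] where
  alg : AssocConformalAlgebra K C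
  ι : B → C
  loc : ∀ (b b' : B) (n : ℕ), N ≤ n → alg.mul n (ι b) (ι b') = 0
  universal : ∀ (C' : Type w) [AddCommGroup C'] [Module K C']
      (A' : AssocConformalAlgebra K C') (ε : B → C'),
      (∀ (b b' : B) (n : ℕ), N ≤ n → A'.mul n (ε b) (ε b') = 0) →
      ∃! φ : C →ₗ[K] C', (∀ b, φ (ι b) = ε b) ∧
        (∀ (n : ℕ) (x y : C), φ (alg.mul n x y) = A'.mul n (φ x) (φ y)) ∧
        (∀ x : C, φ (alg.D x) = A'.D (φ x))

variable {B : Type v} {N : ℕ}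

/-- Evaluate a `D`-free prefix (a list of letters with indices) applied to `x`,
right-normed. -/
def evalAux (F : FreeAssocConformal K B N C) : List (B × Fin N) → C → C
  | [], x => x
  | p :: rest, x => F.alg.mul (p.2 : ℕ) (F.ι p.1) (evalAux F rest x)

/-- The element of `C(B,N)` given by a normal word (right-normed bracketing). -/
def evalWord (F : FreeAssocConformal K B N C) (u : NormalWord B N) : C :=
  evalAux F u.body ((F.alg.D ^ u.exp) (F.ι u.last))

/-- Evaluate an arbitrary word on `D^ω(B)` in `C(B,N)`. -/
def evalCWord (F : FreeAssocConformal K B N C) : CWord B → C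
  | .gen b i => (F.alg.D ^ i) (F.ι b)
  | .mul n u v => F.alg.mul n (evalCWord F u) (evalCWord F v)

/-- `w` is the leading word `\bar f` of `f` with respect to the normal-word
basis `bas` and the weight ordering induced by `r`. -/
def IsLead (bas : Module.Basis (NormalWord B N) K C) (r : B → B → Prop)
    (f : C) (w : NormalWord B N) : Prop :=
  bas.repr f w ≠ 0 ∧ ∀ w', bas.repr f w' ≠ 0 → w' = w ∨ wtLT r w' w

/-- A set of polynomials is monic if each has leading coefficient `1`. -/
def MonicSet (bas : Module.Basis (NormalWord B N) K C) (r : B → B → Prop) (S : Set C) : Prop :=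
  ∀ s ∈ S, ∃ w, IsLead bas r s w ∧ bas.repr s w = 1

/-- Normal `S`-words together with their (formal) leading words:
either `[a_(n) s_(m) c]` with `a, \bar s` `D`-free, or `[a_(n) D^i s]`
with `a` `D`-free; the prefix `a_(n)` is encoded by the list `p`
(empty list = empty `a`). -/
inductive IsNSWord (F : FreeAssocConformal K B N C)
    (bas : Module.Basis (NormalWord B N) K C) (r : B → B → Prop) (S : Set C) :
    C → NormalWord B N → Prop
  | first (p : List (B × Fin N)) (s : C) (hs : s ∈ S) (sw : NormalWord B N)
      (hlead : IsLead bas r s sw) (hfree : sw.exp = 0) (m : Fin N) (c : NormalWord B N) :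
      IsNSWord F bas r S (evalAux F p (F.alg.mul (m : ℕ) s (evalWord F c)))
        ⟨p ++ sw.body ++ (sw.last, m) :: c.body, c.last, c.exp⟩
  | second (p : List (B × Fin N)) (s : C) (hs : s ∈ S) (sw : NormalWord B N)
      (hlead : IsLead bas r s sw) (i : ℕ) :
      IsNSWord F bas r S (evalAux F p ((F.alg.D ^ i) s)) ⟨p ++ sw.body, sw.last, sw.exp + i⟩

/-- `h` can be written as a linear combination of normal `S`-words whose
(formal leading) words all satisfy `P`. -/
def SRep (F : FreeAssocConformal K B N C) (bas : Module.Basis (NormalWord B N) K C)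
    (r : B → B → Prop) (S : Set C) (h : C) (P : NormalWord B N → Prop) : Prop :=
  ∃ (n : ℕ) (α : Fin n → K) (g : Fin n → C) (wd : Fin n → NormalWord B N),
    h = ∑ i, α i • g i ∧ ∀ i, IsNSWord F bas r S (g i) (wd i) ∧ P (wd i)

/-- `h` is trivial modulo `S`: a linear combination of normal `S`-words with
leading words `≤ \bar h`. -/
def TrivialMod (F : FreeAssocConformal K B N C) (bas : Module.Basis (NormalWord B N) K C)
    (r : B → B → Prop) (S : Set C) (h : C) : Prop :=
  SRep F bas r S h (fun wd => ∀ hw, IsLead bas r h hw → wtLE r wd hw)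

/-- `f` is not `D`-free: some monomial has positive `D`-exponent. -/
def NotDFree (bas : Module.Basis (NormalWord B N) K C) (f : C) : Prop :=
  ∃ w, bas.repr f w ≠ 0 ∧ w.exp ≠ 0

/-- All left multiplication compositions `b_(n) s`, `n ≥ N`, are trivial. -/
def LeftMultClosed (F : FreeAssocConformal K B N C) (bas : Module.Basis (NormalWord B N) K C)
    (r : B → B → Prop) (S : Set C) : Prop :=
  ∀ s ∈ S, ∀ (b : B) (n : ℕ), N ≤ n → TrivialMod F bas r S (F.alg.mul n (F.ι b) s)

/-- All right multiplication compositions `s_(n) b` (for `\bar s` not `D`-free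
and `n < N`, or `s` not `D`-free and `n ≥ N`) are trivial. -/
def RightMultClosed (F : FreeAssocConformal K B N C) (bas : Module.Basis (NormalWord B N) K C)
    (r : B → B → Prop) (S : Set C) : Prop :=
  ∀ s ∈ S, ∀ (b : B) (n : ℕ),
    ((∃ sw, IsLead bas r s sw ∧ sw.exp ≠ 0) ∧ n < N) ∨ (NotDFree bas s ∧ N ≤ n) →
    TrivialMod F bas r S (F.alg.mul n s (F.ι b))

/-- `S` is a Gröbner–Shirshov basis in `C(B,N)`: `S` is monic and all
compositions (inclusion, right inclusion, intersection, right intersection,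
left and right multiplication) are trivial modulo `S`. -/
def IsGSBasis (F : FreeAssocConformal K B N C) (bas : Module.Basis (NormalWord B N) K C)
    (r : B → B → Prop) (S : Set C) : Prop :=
  MonicSet bas r S ∧
  -- inclusion: \bar f = a_(n) \bar g_(m) c
  (∀ f ∈ S, ∀ g ∈ S, ∀ fw gw : NormalWord B N,
    IsLead bas r f fw → IsLead bas r g gw → gw.exp = 0 →
    ∀ (p : List (B × Fin N)) (m : Fin N) (c : NormalWord B N),
      fw = ⟨p ++ sw₁ p gw m c, c.last, c.exp⟩ →
      TrivialMod F bas r S (f - evalAux F p (F.alg.mul (m : ℕ) g (evalWord F c)))) ∧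
  -- right inclusion: \bar f = a_(n) \bar g D^i
  (∀ f ∈ S, ∀ g ∈ S, ∀ fw gw : NormalWord B N,
    IsLead bas r f fw → IsLead bas r g gw →
    ∀ (p : List (B × Fin N)) (i : ℕ),
      fw = ⟨p ++ gw.body, gw.last, gw.exp + i⟩ →
      TrivialMod F bas r S (f - evalAux F p ((F.alg.D ^ i) g))) ∧
  -- intersection: w = \bar f_(m) c = a_(n) \bar g, |\bar f| + |\bar g| > |w|
  (∀ f ∈ S, ∀ g ∈ S, ∀ fw gw : NormalWord B N,
    IsLead bas r f fw → IsLead bas r g gw → fw.exp = 0 →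
    ∀ (p : List (B × Fin N)) (m : Fin N) (c : NormalWord B N),
      fw.body ++ (fw.last, m) :: c.body = p ++ gw.body →
      c.last = gw.last → c.exp = gw.exp →
      p.length < fw.body.length + 1 →
      TrivialMod F bas r S (F.alg.mul (m : ℕ) f (evalWord F c) - evalAux F p g)) ∧
  -- right intersection: w = \bar f D^i = a_(n) \bar g, i > 0
  (∀ f ∈ S, ∀ g ∈ S, ∀ fw gw : NormalWord B N,
    IsLead bas r f fw → IsLead bas r g gw →
    ∀ (p : List (B × Fin N)) (i : ℕ), 0 < i →
      fw.body = p ++ gw.body → fw.last = gw.last → fw.exp + i = gw.exp →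
      TrivialMod F bas r S ((F.alg.D ^ i) f - evalAux F p g)) ∧
  LeftMultClosed F bas r S ∧ RightMultClosed F bas r S
where sw₁ (p : List (B × Fin N)) (gw : NormalWord B N) (m : Fin N) (c : NormalWord B N) :
    List (B × Fin N) := gw.body ++ (gw.last, m) :: c.body

/-- The set of `S`-irreducible normal words. -/
def Irr (F : FreeAssocConformal K B N C) (bas : Module.Basis (NormalWord B N) K C)
    (r : B → B → Prop) (S : Set C) : Set (NormalWord B N) :=
  {w | ¬ ∃ g : C, IsNSWord F bas r S g w}

/-- Membership in the (conformal) ideal generated by `S`. -/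
inductive InIdeal (F : FreeAssocConformal K B N C) (S : Set C) : C → Prop
  | mem {s : C} : s ∈ S → InIdeal F S s
  | zero : InIdeal F S 0
  | add {x y : C} : InIdeal F S x → InIdeal F S y → InIdeal F S (x + y)
  | smul (a : K) {x : C} : InIdeal F S x → InIdeal F S (a • x)
  | deriv {x : C} : InIdeal F S x → InIdeal F S (F.alg.D x)
  | mul_left (n : ℕ) (y : C) {x : C} : InIdeal F S x → InIdeal F S (F.alg.mul n y x)
  | mul_right (n : ℕ) (y : C) {x : C} : InIdeal F S x → InIdeal F S (F.alg.mul n x y)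

/-- The ideal generated by `S`, as a submodule. -/
def idealOf (F : FreeAssocConformal K B N C) (S : Set C) : Submodule K C where
  carrier := {x | InIdeal F S x}
  add_mem' := fun hx hy => InIdeal.add hx hy
  zero_mem' := InIdeal.zero
  smul_mem' := fun a _ hx => InIdeal.smul a hx

/-- `S`-words: words containing exactly one occurrence of some `D^i s`, `s ∈ S`. -/
inductive IsSWord (F : FreeAssocConformal K B N C) (S : Set C) : C → Prop
  | base {s : C} (hs : s ∈ S) (i : ℕ) : IsSWord F S ((F.alg.D ^ i) s)
  | mul_right {u : C} (hu : IsSWord F S u) (v : CWord B) (m : ℕ) :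
      IsSWord F S (F.alg.mul m u (evalCWord F v))
  | mul_left {u : C} (hu : IsSWord F S u) (v : CWord B) (m : ℕ) :
      IsSWord F S (F.alg.mul m (evalCWord F v) u)

/-- A reduced set: every monomial of each `s ∈ S` is `(S∖{s})`-irreducible. -/
def IsReducedSet (F : FreeAssocConformal K B N C) (bas : Module.Basis (NormalWord B N) K C)
    (r : B → B → Prop) (S : Set C) : Prop :=
  ∀ s ∈ S, ∀ w, bas.repr s w ≠ 0 → w ∈ Irr F bas r (S \ {s})


section CDAux

variable {K : Type u} [Field K] {B : Type v} {N : ℕ}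
variable {C : Type w} [AddCommGroup C] [Module K C]

/-! ### Order lemmas for the weight ordering -/

theorem CD_wtLE_refl (r : B → B → Prop) (u : NormalWord B N) : wtLE r u u := Or.inr rfl

theorem CD_lex_trans {α : Type*} {R : α → α → Prop}
    (htR : ∀ {x y z : α}, R x y → R y z → R x z) :
    ∀ {l1 l2 l3 : List α}, List.Lex R l1 l2 → List.Lex R l2 l3 → List.Lex R l1 l3 := by
  intro l1 l2 l3 h1 h2
  induction h1 generalizing l3 with
  | nil =>
    cases h2 with
    | cons _ => exact List.Lex.nil
    | rel _ => exact List.Lex.nil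
  | cons h ih =>
    cases h2 with
    | cons h2' => exact List.Lex.cons (ih h2')
    | rel h2' => exact List.Lex.rel h2'
  | rel hab =>
    cases h2 with
    | cons h2' => exact List.Lex.rel hab
    | rel h2' => exact List.Lex.rel (htR hab h2')

theorem CD_plex_trans {α β : Type*} {ra : α → α → Prop} {rb : β → β → Prop}
    (ha : Transitive ra) (hb : Transitive rb) {p q s : α × β}
    (h1 : Prod.Lex ra rb p q) (h2 : Prod.Lex ra rb q s) : Prod.Lex ra rb p s := by
  cases h1 with
  | left b1 b2 h =>
    cases h2 with
    | left b2' b3 h' => exact Prod.Lex.left _ _ (ha h h')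
    | right a h' => exact Prod.Lex.left _ _ h
  | right a h =>
    cases h2 with
    | left b2 b3 h' => exact Prod.Lex.left _ _ h'
    | right _ h' => exact Prod.Lex.right _ (hb h h')

theorem CD_wtLT_trans {r : B → B → Prop} (ht : Transitive r) {a b c : NormalWord B N}
    (h1 : wtLT r a b) (h2 : wtLT r b c) : wtLT r a c := by
  haveI : IsTrans B r := ⟨ht⟩
  rcases h1 with h1 | ⟨e1, h1⟩
  · rcases h2 with h2 | ⟨e2, _⟩
    · exact Or.inl (h1.trans h2)
    · exact Or.inl (e2 ▸ h1)
  · rcases h2 with h2 | ⟨e2, h2⟩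
    · exact Or.inl (e1 ▸ h2)
    · refine Or.inr ⟨e1.trans e2, ?_⟩
      rcases h1 with h1 | ⟨b1, h1⟩
      · rcases h2 with h2 | ⟨b2, h2⟩
        · refine Or.inl (CD_lex_trans (fun {x y z} hx hy => ?_) h1 h2)
          exact CD_plex_trans (rb := fun x1 x2 : Fin N => x1 < x2) ht
            (fun _ _ _ ha hb => lt_trans ha hb) hx hy
        · exact Or.inl (b2 ▸ h1)
      · rcases h2 with h2 | ⟨b2, h2⟩
        · exact Or.inl (b1 ▸ h2)
        · refine Or.inr ⟨b1.trans b2, ?_⟩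
          rcases h1 with h1 | ⟨l1, h1⟩
          · rcases h2 with h2 | ⟨l2, h2⟩
            · exact Or.inl (ht h1 h2)
            · exact Or.inl (l2 ▸ h1)
          · rcases h2 with h2 | ⟨l2, h2⟩
            · exact Or.inl (l1 ▸ h2)
            · exact Or.inr ⟨l1.trans l2, h1.trans h2⟩

theorem CD_wtLE_trans {r : B → B → Prop} (ht : Transitive r) {a b c : NormalWord B N}
    (h1 : wtLE r a b) (h2 : wtLE r b c) : wtLE r a c := by
  rcases h1 with h1 | rfl
  · rcases h2 with h2 | rfl
    · exact Or.inl (CD_wtLT_trans ht h1 h2)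
    · exact Or.inl h1
  · exact h2

theorem CD_lex_append_of_lex {α : Type*} {R : α → α → Prop} {l1 l2 : List α}
    (hlen : l1.length = l2.length) (h : List.Lex R l1 l2)
    (t1 t2 : List α) : List.Lex R (l1 ++ t1) (l2 ++ t2) := by
  induction l1 generalizing l2 with
  | nil =>
    cases l2 with
    | nil => cases h
    | cons b l2 => simp at hlen
  | cons a l ih =>
    cases l2 with
    | nil => simp at hlen
    | cons b l2 =>
      cases h with
      | cons h => exact List.Lex.cons (ih (by simpa using hlen) h)
      | rel h => exact List.Lex.rel h

theorem CD_lex_append_middle {α : Type*} {R : α → α → Prop} (l : List α) {a b : α}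
    (h : R a b) (t1 t2 : List α) : List.Lex R (l ++ a :: t1) (l ++ b :: t2) := by
  induction l with
  | nil => exact List.Lex.rel h
  | cons x l ih => exact List.Lex.cons ih

theorem CD_wtLE_cons_mono {r : B → B → Prop} (b : B) {q Q : Fin N} (hq : q ≤ Q)
    {v V : NormalWord B N} (h : wtLE r v V) :
    wtLE r ⟨(b, q) :: v.body, v.last, v.exp⟩ ⟨(b, Q) :: V.body, V.last, V.exp⟩ := by
  rcases lt_or_eq_of_le hq with hq | rfl
  · rcases h with h | rfl
    · rcases h with h | ⟨e, _⟩
      · exact Or.inl (Or.inl (by simpa using Nat.succ_lt_succ h))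
      · exact Or.inl (Or.inr ⟨by simp [e], Or.inl (List.Lex.rel (Prod.Lex.right b hq))⟩)
    · exact Or.inl (Or.inr ⟨rfl, Or.inl (List.Lex.rel (Prod.Lex.right b hq))⟩)
  · rcases h with h | rfl
    · rcases h with h | ⟨e, h⟩
      · exact Or.inl (Or.inl (by simpa using Nat.succ_lt_succ h))
      · refine Or.inl (Or.inr ⟨by simp [e], ?_⟩)
        rcases h with h | ⟨eb, h⟩
        · exact Or.inl (List.Lex.cons h)
        · exact Or.inr ⟨by rw [eb], h⟩
    · exact Or.inr rfl

theorem CD_wtLE_shiftD_mono {r : B → B → Prop} {v V : NormalWord B N}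
    (h : wtLE r v V) (i : ℕ) : wtLE r (v.shiftD i) (V.shiftD i) := by
  rcases h with h | rfl
  · rcases h with h | ⟨e, h⟩
    · exact Or.inl (Or.inl h)
    · rcases h with h | ⟨eb, h⟩
      · exact Or.inl (Or.inr ⟨e, Or.inl h⟩)
      · rcases h with h | ⟨el, h⟩
        · exact Or.inl (Or.inr ⟨e, Or.inr ⟨eb, Or.inl h⟩⟩)
        · exact Or.inl (Or.inr ⟨e, Or.inr ⟨eb, Or.inr ⟨el, Nat.add_lt_add_right h i⟩⟩⟩)
  · exact Or.inr rfl

theorem CD_wtLE_exp_mono (r : B → B → Prop) (l : List (B × Fin N)) (c : B) {e e' : ℕ}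
    (h : e ≤ e') : wtLE r (⟨l, c, e⟩ : NormalWord B N) ⟨l, c, e'⟩ := by
  rcases lt_or_eq_of_le h with h | rfl
  · exact Or.inl (Or.inr ⟨rfl, Or.inr ⟨rfl, Or.inr ⟨rfl, h⟩⟩⟩)
  · exact Or.inr rfl

theorem CD_wtLE_natMul_mono {r : B → B → Prop} (hN : 0 < N) {w fw : NormalWord B N}
    (h : wtLE r w fw) (u : NormalWord B N) :
    wtLE r (w.natMul u hN) (fw.natMul u hN) := by
  rcases h with h | rfl
  · rcases h with h | ⟨e, h⟩
    · refine Or.inl (Or.inl ?_)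
      simp only [NormalWord.natMul, List.length_append, List.length_cons]
      omega
    · rcases h with h | ⟨eb, h⟩
      · exact Or.inl (Or.inr ⟨by simp [NormalWord.natMul, e],
          Or.inl (CD_lex_append_of_lex e h _ _)⟩)
      · rcases h with h | ⟨el, _⟩
        · refine Or.inl (Or.inr ⟨by simp [NormalWord.natMul, eb], Or.inl ?_⟩)
          show List.Lex _ (w.body ++ _) (fw.body ++ _)
          rw [eb]
          exact CD_lex_append_middle fw.body (Prod.Lex.left _ _ h) _ _
        · refine Or.inr ?_
          simp [NormalWord.natMul, eb, el]
  · exact Or.inr rfl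

/-! ### Bounded-support predicate -/

/-- Every monomial in the support of `x` is `≤ V`. -/
def CDBdd (bas : Module.Basis (NormalWord B N) K C) (r : B → B → Prop)
    (V : NormalWord B N) (x : C) : Prop :=
  ∀ w', bas.repr x w' ≠ 0 → wtLE r w' V

variable {bas : Module.Basis (NormalWord B N) K C} {r : B → B → Prop}

theorem CDBdd_zero (V : NormalWord B N) : CDBdd bas r V 0 := by
  intro w' hw
  simp at hw

theorem CDBdd_congr {V : NormalWord B N} {x y : C} (h : x = y)
    (hb : CDBdd bas r V y) : CDBdd bas r V x := h ▸ hb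

theorem CDBdd_add {V : NormalWord B N} {x y : C}
    (hx : CDBdd bas r V x) (hy : CDBdd bas r V y) : CDBdd bas r V (x + y) := by
  intro w' hw
  rw [map_add, Finsupp.add_apply] at hw
  by_cases h1 : bas.repr x w' = 0
  · refine hy w' fun h2 => hw ?_
    rw [h1, h2, add_zero]
  · exact hx w' h1

theorem CDBdd_smul {V : NormalWord B N} (a : K) {x : C}
    (hx : CDBdd bas r V x) : CDBdd bas r V (a • x) := by
  intro w' hw
  rw [map_smul, Finsupp.smul_apply] at hw
  exact hx w' fun h => hw (by rw [h, smul_zero])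

theorem CDBdd_neg {V : NormalWord B N} {x : C}
    (hx : CDBdd bas r V x) : CDBdd bas r V (-x) := by
  intro w' hw
  rw [map_neg, Finsupp.neg_apply, neg_ne_zero] at hw
  exact hx w' hw

theorem CDBdd_sum {ι : Type*} (s : Finset ι) (g : ι → C) {V : NormalWord B N}
    (h : ∀ i ∈ s, CDBdd bas r V (g i)) : CDBdd bas r V (∑ i ∈ s, g i) := by
  classical
  induction s using Finset.induction_on with
  | empty => simpa using CDBdd_zero V
  | insert a s hx ih =>
    rw [Finset.sum_insert hx]
    exact CDBdd_add (h _ (Finset.mem_insert_self _ _))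
      (ih fun i hi => h i (Finset.mem_insert_of_mem hi))

theorem CDBdd_mono (ht : Transitive r) {V V' : NormalWord B N} (hVV' : wtLE r V V')
    {x : C} (h : CDBdd bas r V x) : CDBdd bas r V' x :=
  fun w' hw => CD_wtLE_trans ht (h w' hw) hVV'

theorem CDBdd_basis {v V : NormalWord B N} (hvV : wtLE r v V) :
    CDBdd bas r V (bas v) := by
  intro w' hw
  rw [Module.Basis.repr_self] at hw
  rcases eq_or_ne w' v with rfl | hne
  · exact hvV
  · exact absurd (Finsupp.single_eq_of_ne' (Ne.symm hne)) hw

theorem CDBdd_map (φ : C →ₗ[K] C) {x : C} {V' : NormalWord B N}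
    (h : ∀ v, bas.repr x v ≠ 0 → CDBdd bas r V' (φ (bas v))) :
    CDBdd bas r V' (φ x) := by
  have hx : φ x = ∑ v ∈ (bas.repr x).support, bas.repr x v • φ (bas v) := by
    have h0 := bas.linearCombination_repr x
    rw [Finsupp.linearCombination_apply, Finsupp.sum] at h0
    conv_lhs => rw [← h0]
    rw [map_sum]
    simp_rw [map_smul]
  exact CDBdd_congr hx (CDBdd_sum _ _ fun v hv =>
    CDBdd_smul _ (h v (Finsupp.mem_support_iff.mp hv)))

/-! ### Algebraic support lemmas in `C(B,N)` -/

variable (F : FreeAssocConformal K B N C)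

theorem CD_mul_basis (hbas : ∀ w, bas w = evalWord F w) (q : ℕ) (hq : q < N) (b : B)
    (v : NormalWord B N) :
    F.alg.mul q (F.ι b) (bas v) = bas ⟨(b, ⟨q, hq⟩) :: v.body, v.last, v.exp⟩ := by
  rw [hbas, hbas]
  rfl

theorem CDBdd_consL (hbas : ∀ w, bas w = evalWord F w) (ht : Transitive r)
    (q : ℕ) (hq : q < N) (b : B) {V : NormalWord B N} {y : C}
    (h : CDBdd bas r V y) :
    CDBdd bas r ⟨(b, ⟨q, hq⟩) :: V.body, V.last, V.exp⟩ (F.alg.mul q (F.ι b) y) := by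
  refine CDBdd_map (F.alg.mul q (F.ι b)) fun v hv => ?_
  rw [CD_mul_basis F hbas q hq b v]
  exact CDBdd_basis (CD_wtLE_cons_mono b le_rfl (h v hv))

theorem CDBdd_D_word (hbas : ∀ w, bas w = evalWord F w) (ht : Transitive r) :
    ∀ (l : List (B × Fin N)) (c : B) (e : ℕ),
      CDBdd bas r ⟨l, c, e + 1⟩ (F.alg.D (evalWord F ⟨l, c, e⟩)) := by
  intro l
  induction l with
  | nil =>
    intro c e
    have : F.alg.D (evalWord F ⟨[], c, e⟩) = bas ⟨[], c, e + 1⟩ := by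
      rw [hbas]
      show F.alg.D ((F.alg.D ^ e) (F.ι c)) = (F.alg.D ^ (e + 1)) (F.ι c)
      rw [pow_succ', Module.End.mul_apply]
    exact CDBdd_congr this (CDBdd_basis (CD_wtLE_refl r _))
  | cons p t ih =>
    obtain ⟨b, k⟩ := p
    intro c e
    have hleib := F.alg.leibniz (k : ℕ) (F.ι b) (evalWord F ⟨t, c, e⟩)
    refine CDBdd_congr (x := F.alg.D (evalWord F ⟨(b, k) :: t, c, e⟩)) hleib (CDBdd_add ?_ ?_)
    · -- term with D on the generator
      rcases Nat.eq_zero_or_pos (k : ℕ) with hk | hk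
      · have : F.alg.mul (k : ℕ) (F.alg.D (F.ι b)) (evalWord F ⟨t, c, e⟩) = 0 := by
          rw [hk]
          exact F.alg.D_mul_zero _ _
        exact CDBdd_congr this (CDBdd_zero _)
      · have hlt : (k : ℕ) - 1 < N := lt_of_le_of_lt (Nat.sub_le _ _) k.isLt
        have hDm := F.alg.D_mul (k : ℕ) (F.ι b) (evalWord F ⟨t, c, e⟩) hk
        refine CDBdd_congr hDm (CDBdd_neg (CDBdd_smul _ ?_))
        have hword : F.alg.mul ((k : ℕ) - 1) (F.ι b) (evalWord F ⟨t, c, e⟩)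
            = bas ⟨(b, ⟨(k : ℕ) - 1, hlt⟩) :: t, c, e⟩ := by
          rw [hbas]
          rfl
        refine CDBdd_congr hword (CDBdd_basis (Or.inl (Or.inr ⟨rfl, Or.inl ?_⟩)))
        exact List.Lex.rel (Prod.Lex.right b (by rw [Fin.lt_def]; simpa using Nat.sub_lt hk one_pos))
    · -- term with D inside
      have := CDBdd_consL F hbas ht (k : ℕ) k.isLt b (ih c e)
      simpa using this

theorem CDBdd_D (hbas : ∀ w, bas w = evalWord F w) (ht : Transitive r)
    {V : NormalWord B N} {x : C} (h : CDBdd bas r V x) :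
    CDBdd bas r (V.shiftD 1) (F.alg.D x) := by
  refine CDBdd_map F.alg.D fun v hv => ?_
  have hb : (bas v : C) = evalWord F ⟨v.body, v.last, v.exp⟩ := hbas v
  rw [hb]
  exact CDBdd_mono ht (CD_wtLE_shiftD_mono (h v hv) 1)
    (CDBdd_D_word F hbas ht v.body v.last v.exp)

theorem CD_mul_D_right (n : ℕ) (a y : C) :
    F.alg.mul n a (F.alg.D y) =
      F.alg.D (F.alg.mul n a y) - F.alg.mul n (F.alg.D a) y := by
  rw [F.alg.leibniz n a y, add_sub_cancel_left]

/-- Support bound for `b_(m) (D^j c)`. -/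
theorem CDBdd_gen_Dpow (hbas : ∀ w, bas w = evalWord F w) (ht : Transitive r)
    (hN : 0 < N) (b c : B) (j : ℕ) :
    ∀ m : ℕ, CDBdd bas r ⟨[(b, ⟨N - 1, Nat.sub_lt hN one_pos⟩)], c, j⟩
      (F.alg.mul m (F.ι b) ((F.alg.D ^ j) (F.ι c))) := by
  induction j with
  | zero =>
    intro m
    by_cases hm : m < N
    · have hword : F.alg.mul m (F.ι b) ((F.alg.D ^ 0) (F.ι c))
          = bas ⟨[(b, ⟨m, hm⟩)], c, 0⟩ := by
        rw [hbas]
        rfl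
      refine CDBdd_congr hword (CDBdd_basis ?_)
      exact CD_wtLE_cons_mono b
        (by rw [Fin.le_def]; simp; omega) (CD_wtLE_refl r ⟨[], c, 0⟩)
    · have : F.alg.mul m (F.ι b) ((F.alg.D ^ 0) (F.ι c)) = 0 := by
        show F.alg.mul m (F.ι b) (F.ι c) = 0
        exact F.loc b c m (le_of_not_gt hm)
      exact CDBdd_congr this (CDBdd_zero _)
  | succ j ih =>
    intro m
    have hpow : (F.alg.D ^ (j + 1)) (F.ι c) = F.alg.D ((F.alg.D ^ j) (F.ι c)) := by
      rw [pow_succ', Module.End.mul_apply]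
    rw [hpow, CD_mul_D_right, sub_eq_add_neg]
    refine CDBdd_add ?_ (CDBdd_neg ?_)
    · exact CDBdd_D F hbas ht (ih m)
    · cases m with
      | zero =>
        rw [F.alg.D_mul_zero]
        exact CDBdd_zero _
      | succ m =>
        rw [F.alg.D_mul (m + 1) _ _ (Nat.succ_pos m)]
        refine CDBdd_neg (CDBdd_smul _ ?_)
        exact CDBdd_mono ht (CD_wtLE_exp_mono r _ _ (Nat.le_succ j)) (ih m)

/-- Support bound for `b_(m) [u]` : all monomials are `≤ b ♮ u`. -/
theorem CDBdd_gen_mul (hbas : ∀ w, bas w = evalWord F w) (ht : Transitive r)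
    (hN : 0 < N) :
    ∀ (L : ℕ) (u : NormalWord B N), u.body.length ≤ L → ∀ (b : B) (m : ℕ),
      CDBdd bas r (NormalWord.natMul ⟨[], b, 0⟩ u hN)
        (F.alg.mul m (F.ι b) (evalWord F u)) := by
  intro L
  induction L with
  | zero =>
    rintro ⟨body, c, e⟩ hlen b m
    have hb : body = [] := List.eq_nil_of_length_eq_zero (Nat.le_zero.mp hlen)
    subst hb
    exact CDBdd_gen_Dpow F hbas ht hN b c e m
  | succ L ih =>
    rintro ⟨body, c, e⟩ hlen b m
    cases body with
    | nil => exact CDBdd_gen_Dpow F hbas ht hN b c e m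
    | cons p t =>
      obtain ⟨cH, k⟩ := p
      have key : ∀ m' k', CDBdd bas r
          (NormalWord.natMul ⟨[], b, 0⟩ ⟨(cH, k) :: t, c, e⟩ hN)
          (F.alg.mul m' (F.ι b) (F.alg.mul k' (F.ι cH) (evalWord F ⟨t, c, e⟩))) := by
        intro m'
        induction m' using Nat.strong_induction_on with
        | _ m' ihm =>
          intro k'
          by_cases hm' : m' < N
          · have hin := ih ⟨t, c, e⟩ (by simpa using hlen) cH k'
            have hc := CDBdd_consL F hbas ht m' hm' b hin
            refine CDBdd_mono ht ?_ hc
            exact CD_wtLE_cons_mono b (by rw [Fin.le_def]; simp; omega)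
              (CD_wtLE_refl r (NormalWord.natMul ⟨[], cH, 0⟩ ⟨t, c, e⟩ hN))
          · push_neg at hm'
            have hz : F.alg.mul m' (F.ι b) (F.ι cH) = 0 := F.loc b cH m' hm'
            have hassoc := F.alg.assoc m' k' (F.ι b) (F.ι cH) (evalWord F ⟨t, c, e⟩)
            rw [hz] at hassoc
            rw [map_zero, LinearMap.zero_apply] at hassoc
            rw [Finset.sum_range_succ'] at hassoc
            simp only [pow_zero, one_mul, Nat.choose_zero_right, Nat.cast_one,
              Nat.sub_zero, Nat.add_zero, add_zero, one_smul] at hassoc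
            have hX := eq_neg_of_add_eq_zero_right hassoc.symm
            refine CDBdd_congr hX (CDBdd_neg (CDBdd_sum _ _ fun i hi => CDBdd_smul _ ?_))
            exact ihm (m' - (i + 1)) (Nat.sub_lt (lt_of_lt_of_le hN hm') (Nat.succ_pos i)) (k' + (i + 1))
      exact key m (k : ℕ)

theorem CDBdd_Dpow_left {V : NormalWord B N} (y x : C)
    (h : ∀ m, CDBdd bas r V (F.alg.mul m x y)) :
    ∀ (e n : ℕ), CDBdd bas r V (F.alg.mul n ((F.alg.D ^ e) x) y) := by
  intro e
  induction e with
  | zero =>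
    intro n
    have : (F.alg.D ^ 0) x = x := by rw [pow_zero, Module.End.one_apply]
    rw [this]
    exact h n
  | succ e ihe =>
    intro n
    have hp : (F.alg.D ^ (e + 1)) x = F.alg.D ((F.alg.D ^ e) x) := by
      rw [pow_succ', Module.End.mul_apply]
    rw [hp]
    cases n with
    | zero =>
      rw [F.alg.D_mul_zero]
      exact CDBdd_zero _
    | succ n =>
      rw [F.alg.D_mul (n + 1) _ y (Nat.succ_pos n)]
      exact CDBdd_neg (CDBdd_smul _ (ihe n))

/-- Support bound for `[w]_(n) [u]` : all monomials are `≤ w^{\D} ♮ u`. -/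
theorem CDBdd_word_mul (hbas : ∀ w, bas w = evalWord F w) (ht : Transitive r)
    (hN : 0 < N) (u : NormalWord B N) :
    ∀ (l : List (B × Fin N)) (cl : B) (el : ℕ) (n : ℕ),
      CDBdd bas r (NormalWord.natMul ⟨l, cl, el⟩ u hN)
        (F.alg.mul n (evalWord F ⟨l, cl, el⟩) (evalWord F u)) := by
  intro l
  induction l with
  | nil =>
    intro cl el n
    exact CDBdd_Dpow_left F (evalWord F u) (F.ι cl)
      (fun m => CDBdd_gen_mul F hbas ht hN u.body.length u le_rfl cl m) el n
  | cons p t ih =>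
    obtain ⟨b, k⟩ := p
    intro cl el n
    have hassoc := F.alg.assoc (k : ℕ) n (F.ι b) (evalWord F ⟨t, cl, el⟩) (evalWord F u)
    refine CDBdd_congr hassoc (CDBdd_sum _ _ fun i hi => CDBdd_smul _ ?_)
    have hlt : (k : ℕ) - i < N := lt_of_le_of_lt (Nat.sub_le _ _) k.isLt
    have hc := CDBdd_consL F hbas ht ((k : ℕ) - i) hlt b (ih cl el (n + i))
    refine CDBdd_mono ht ?_ hc
    exact CD_wtLE_cons_mono b (by rw [Fin.le_def]; exact Nat.sub_le _ _)
      (CD_wtLE_refl r (NormalWord.natMul ⟨t, cl, el⟩ u hN))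

end CDAux

theorem lead_poly_mul_le_natMul {K : Type u} [Field K] [CharZero K]
    {B : Type v} {N : ℕ} {C : Type w} [AddCommGroup C] [Module K C]
    (F : FreeAssocConformal K B N C) (bas : Module.Basis (NormalWord B N) K C)
    (hbas : ∀ w, bas w = evalWord F w)
    (r : B → B → Prop) (hr : IsWellOrder B r) (hN : 0 < N)
    (f : C) (fw : NormalWord B N) (hf : IsLead bas r f fw)
    (u : NormalWord B N) (n : ℕ) (w : NormalWord B N)
    (hw : IsLead bas r (F.alg.mul n f (evalWord F u)) w) :
    wtLE r w (fw.natMul u hN) := by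
  haveI : IsTrans B r := by haveI := hr; infer_instance
  have ht : Transitive r := fun a b c hab hbc => IsTrans.trans a b c hab hbc
  have hBdd : CDBdd bas r (fw.natMul u hN) (((F.alg.mul n).flip (evalWord F u)) f) := by
    refine CDBdd_map _ fun v hv => ?_
    have hb : (bas v : C) = evalWord F ⟨v.body, v.last, v.exp⟩ := hbas v
    rw [LinearMap.flip_apply, hb]
    refine CDBdd_mono ht (CD_wtLE_natMul_mono hN ?_ u)
      (CDBdd_word_mul F hbas ht hN u v.body v.last v.exp n)
    rcases hf.2 v hv with h | h
    · exact Or.inr h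
    · exact Or.inl h
  exact hBdd w hw.1
end

section
/- Let S be a monic subset of the free associative conformal algebra C(B, N). Then every f ∈ C(B, N) can be written as f = Σ_j α_j [u_j]_{D^{l_j} s_j} + Σ_k α_k [u_k], where each [u_j]_{D^{l_j} s_j} is a normal S-word with leading word at most \bar{f}, each [u_k] is an S-irreducible normal word with u_k ≤ \bar{f}, the α's are scalars, and s_j ∈ S. -/
/-!  Basic definitions for (associative) conformal algebras, the free
associative conformal algebra `C(B,N)`, normal words, the weight ordering,
normal `S`-words, compositions and Gröbner–Shirshov bases, following
Ni–Chen, "A new Composition-Diamond lemma for associative conformal algebras". -/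

universe u v w

open scoped BigOperators

variable {K : Type u} [Field K] {C : Type w} [AddCommGroup C] [Module K C]

variable {B : Type v} {N : ℕ}

/-! ### Auxiliary development for the proof -/

namespace CDaux

open NormalWord

variable {B : Type v} {N : ℕ}

/-- letter relation -/
abbrev lrel (r : B → B → Prop) : (B × Fin N) → (B × Fin N) → Prop :=
  Prod.Lex r (· < ·)

/-- cons a letter onto a normal word -/
def wcons (a : B × Fin N) (u : NormalWord B N) : NormalWord B N :=
  ⟨a :: u.body, u.last, u.exp⟩

/-- prepend a list of letters onto a normal word -/
def wpre (p : List (B × Fin N)) (u : NormalWord B N) : NormalWord B N :=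
  ⟨p ++ u.body, u.last, u.exp⟩

@[simp] lemma wpre_nil (u : NormalWord B N) : wpre [] u = u := rfl

lemma wpre_cons (a : B × Fin N) (p : List (B × Fin N)) (u : NormalWord B N) :
    wpre (a :: p) u = wcons a (wpre p u) := rfl

section Order

variable {r : B → B → Prop}

lemma wtLT_iff {u v : NormalWord B N} :
    wtLT r u v ↔ u.body.length < v.body.length ∨
    (u.body.length = v.body.length ∧
      (List.Lex (lrel r) u.body v.body ∨
        (u.body = v.body ∧ (r u.last v.last ∨ (u.last = v.last ∧ u.exp < v.exp))))) :=
  Iff.rfl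

variable [hwo : IsWellOrder B r]

lemma wtLT_trans {u v w : NormalWord B N} (h₁ : wtLT r u v) (h₂ : wtLT r v w) :
    wtLT r u w := by
  haveI : IsStrictTotalOrder (B × Fin N) (lrel r) := by constructor
  haveI : IsStrictTotalOrder (List (B × Fin N)) (List.Lex (lrel r)) :=
      { isStrictWeakOrder_of_isOrderConnected with }
  rcases h₁ with h₁ | ⟨e₁, h₁⟩ <;> rcases h₂ with h₂ | ⟨e₂, h₂⟩
  · exact Or.inl (h₁.trans h₂)
  · exact Or.inl (e₂ ▸ h₁)
  · exact Or.inl (e₁ ▸ h₂)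
  · refine Or.inr ⟨e₁.trans e₂, ?_⟩
    rcases h₁ with h₁ | ⟨b₁, h₁⟩ <;> rcases h₂ with h₂ | ⟨b₂, h₂⟩
    · exact Or.inl (_root_.trans h₁ h₂)
    · exact Or.inl (b₂ ▸ h₁)
    · exact Or.inl (b₁ ▸ h₂)
    · refine Or.inr ⟨b₁.trans b₂, ?_⟩
      rcases h₁ with h₁ | ⟨c₁, h₁⟩ <;> rcases h₂ with h₂ | ⟨c₂, h₂⟩
      · exact Or.inl (_root_.trans h₁ h₂)
      · exact Or.inl (c₂ ▸ h₁)
      · exact Or.inl (c₁ ▸ h₂)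
      · exact Or.inr ⟨c₁.trans c₂, h₁.trans h₂⟩

lemma wtLT_irrefl (u : NormalWord B N) : ¬ wtLT r u u := by
  haveI : IsStrictTotalOrder (B × Fin N) (lrel r) := by constructor
  haveI : IsStrictTotalOrder (List (B × Fin N)) (List.Lex (lrel r)) :=
      { isStrictWeakOrder_of_isOrderConnected with }
  rintro (h | ⟨-, h | ⟨-, h | ⟨-, h⟩⟩⟩)
  · exact lt_irrefl _ h
  · exact irrefl_of (List.Lex (lrel r)) _ h
  · exact irrefl_of r _ h
  · exact lt_irrefl _ h

lemma wtLT_asymm {u v : NormalWord B N} (h : wtLT r u v) : ¬ wtLT r v u :=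
  fun h' => wtLT_irrefl u (wtLT_trans h h')

lemma wtLT_tricho (u v : NormalWord B N) : wtLT r u v ∨ u = v ∨ wtLT r v u := by
  haveI : IsStrictTotalOrder (B × Fin N) (lrel r) := by constructor
  rcases Nat.lt_trichotomy u.body.length v.body.length with h | h | h
  · exact Or.inl (Or.inl h)
  · rcases trichotomous_of (List.Lex (lrel r)) u.body v.body with hb | hb | hb
    · exact Or.inl (Or.inr ⟨h, Or.inl hb⟩)
    · rcases trichotomous_of r u.last v.last with hl | hl | hl
      · exact Or.inl (Or.inr ⟨h, Or.inr ⟨hb, Or.inl hl⟩⟩)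
      · rcases Nat.lt_trichotomy u.exp v.exp with he | he | he
        · exact Or.inl (Or.inr ⟨h, Or.inr ⟨hb, Or.inr ⟨hl, he⟩⟩⟩)
        · refine Or.inr (Or.inl ?_)
          cases u; cases v
          simp_all
        · exact Or.inr (Or.inr (Or.inr ⟨h.symm, Or.inr ⟨hb.symm, Or.inr ⟨hl.symm, he⟩⟩⟩))
      · exact Or.inr (Or.inr (Or.inr ⟨h.symm, Or.inr ⟨hb.symm, Or.inl hl⟩⟩))
    · exact Or.inr (Or.inr (Or.inr ⟨h.symm, Or.inl hb⟩))
  · exact Or.inr (Or.inr (Or.inl h))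

lemma wtLE_trans {u v w : NormalWord B N} (h₁ : wtLE r u v) (h₂ : wtLE r v w) :
    wtLE r u w := by
  rcases h₁ with h₁ | rfl
  · rcases h₂ with h₂ | rfl
    · exact Or.inl (wtLT_trans h₁ h₂)
    · exact Or.inl h₁
  · exact h₂

lemma wtLT_of_wtLE_of_wtLT {u v w : NormalWord B N} (h₁ : wtLE r u v) (h₂ : wtLT r v w) :
    wtLT r u w := by
  rcases h₁ with h₁ | rfl
  · exact wtLT_trans h₁ h₂
  · exact h₂

lemma wtLT_of_wtLT_of_wtLE {u v w : NormalWord B N} (h₁ : wtLT r u v) (h₂ : wtLE r v w) :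
    wtLT r u w := by
  rcases h₂ with h₂ | rfl
  · exact wtLT_trans h₁ h₂
  · exact h₁

omit hwo in
lemma wtLE_of_wtLT {u v : NormalWord B N} (h : wtLT r u v) : wtLE r u v := Or.inl h

omit hwo in
lemma wtLE_refl (u : NormalWord B N) : wtLE r u u := Or.inr rfl

end Order

section WF

variable {r : B → B → Prop} [hwo : IsWellOrder B r]

/-- `List.Lex` restricted to lists of a fixed length `n`. -/
def lexLen (r : B → B → Prop) (N n : ℕ) (l₁ l₂ : List (B × Fin N)) : Prop :=
  List.Lex (lrel r) l₁ l₂ ∧ l₁.length = n ∧ l₂.length = n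

lemma acc_lexLen : ∀ (n : ℕ) (l : List (B × Fin N)), Acc (lexLen r N n) l := by
  intro n
  induction n with
  | zero =>
    intro l
    constructor
    rintro y ⟨hlex, -, hl⟩
    rw [List.length_eq_zero_iff] at hl
    subst hl
    exact absurd hlex (by intro h; cases h)
  | succ n ihn =>
    have hwf : WellFounded (lrel r (N := N)) := IsWellFounded.wf
    have key : ∀ a : B × Fin N, Acc (lrel r) a →
        ∀ t, Acc (lexLen r N n) t → ∀ l, l = a :: t → Acc (lexLen r N (n + 1)) l := by
      intro a ha
      induction ha with
      | intro a _ iha =>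
        intro t ht
        induction ht with
        | intro t _ iht =>
          rintro l rfl
          constructor
          rintro y ⟨hlex, hy, hl⟩
          have hex : ∃ b s, y = b :: s := by
            cases y with
            | nil => simp at hy
            | cons b s => exact ⟨b, s, rfl⟩
          obtain ⟨b, s, rfl⟩ := hex
          cases hlex with
          | rel h => exact iha b h s (ihn s) _ rfl
          | cons h =>
            exact iht s ⟨h, by simpa using hy, by simpa using hl⟩ _ rfl
    intro l
    constructor
    rintro y ⟨hlex, hy, hl⟩
    have hex : ∃ b s, y = b :: s := by
      cases y with
      | nil => simp at hy
      | cons b s => exact ⟨b, s, rfl⟩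
    obtain ⟨b, s, rfl⟩ := hex
    exact key b (hwf.apply b) s (ihn s) _ rfl

lemma wtLT_wf : WellFounded (wtLT r (N := N)) := by
  constructor
  have hwfb : WellFounded r := hwo.wf
  have H : ∀ n : ℕ, ∀ u : NormalWord B N, u.body.length = n → Acc (wtLT r) u := by
    intro n
    induction n using Nat.strong_induction_on with
    | _ n ihn =>
      have key : ∀ l, Acc (lexLen r N n) l → l.length = n → ∀ b, Acc r b →
          ∀ e : ℕ, ∀ w : NormalWord B N,
          w.body = l → w.last = b → w.exp = e → Acc (wtLT r) w := by
        intro l hl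
        induction hl with
        | intro l _ ihl =>
          intro hln b hb
          induction hb with
          | intro b _ ihb =>
            intro e
            induction e using Nat.strong_induction_on with
            | _ e ihe =>
              intro w hw1 hw2 hw3
              constructor
              intro v hv
              rcases wtLT_iff.mp hv with hv | ⟨hlen, hv | ⟨hbody, hv | ⟨hlast, hexp⟩⟩⟩
              · refine ihn v.body.length ?_ v rfl
                rw [hw1, hln] at hv
                exact hv
              · have hlen' : v.body.length = n := by rw [hlen, hw1, hln]
                exact ihl v.body ⟨hw1 ▸ hv, hlen', hln⟩ hlen' v.last (hwfb.apply v.last)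
                  v.exp v rfl rfl rfl
              · exact ihb v.last (hw2 ▸ hv) v.exp v (hbody.trans hw1) rfl rfl
              · exact ihe v.exp (hw3 ▸ hexp) v (hbody.trans hw1) (hlast.trans hw2) rfl
      intro u hu
      exact key u.body (acc_lexLen n u.body) hu u.last (hwfb.apply u.last) u.exp u rfl rfl rfl
  intro u
  exact H u.body.length u rfl

end WF

section Mono

variable {r : B → B → Prop}

lemma wcons_lt_wcons {u v : NormalWord B N} (a : B × Fin N) (h : wtLT r u v) :
    wtLT r (wcons a u) (wcons a v) := by
  rcases h with h | ⟨hlen, h | ⟨hbody, h⟩⟩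
  · exact Or.inl (by simpa [wcons] using Nat.succ_lt_succ h)
  · exact Or.inr ⟨by simpa [wcons] using hlen, Or.inl (List.Lex.cons h)⟩
  · exact Or.inr ⟨by simpa [wcons] using hlen, Or.inr ⟨by simp [wcons, hbody], h⟩⟩

lemma wpre_lt_wpre {u v : NormalWord B N} (p : List (B × Fin N)) (h : wtLT r u v) :
    wtLT r (wpre p u) (wpre p v) := by
  induction p with
  | nil => simpa using h
  | cons a p ih => rw [wpre_cons, wpre_cons]; exact wcons_lt_wcons a ih

/-- head-letter decrease dominates, provided the length does not grow. -/
lemma lt_of_head {a a' : B × Fin N} {l l' : List (B × Fin N)} {x y : B} {e f : ℕ}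
    (h : lrel r a a') (hlen : l.length ≤ l'.length) :
    wtLT r ⟨a :: l, x, e⟩ ⟨a' :: l', y, f⟩ := by
  rcases lt_or_eq_of_le hlen with hl | hl
  · exact Or.inl (by simpa using Nat.succ_lt_succ hl)
  · exact Or.inr ⟨by simpa using hl, Or.inl (List.Lex.rel h)⟩

lemma shiftD_lt_shiftD {u v : NormalWord B N} (i : ℕ) (h : wtLT r u v) :
    wtLT r (u.shiftD i) (v.shiftD i) := by
  rcases h with h | ⟨hlen, h | ⟨hbody, h | ⟨hlast, h⟩⟩⟩
  · exact Or.inl h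
  · exact Or.inr ⟨hlen, Or.inl h⟩
  · exact Or.inr ⟨hlen, Or.inr ⟨hbody, Or.inl h⟩⟩
  · exact Or.inr ⟨hlen, Or.inr ⟨hbody, Or.inr ⟨hlast, Nat.add_lt_add_right h i⟩⟩⟩

lemma shiftD_le_shiftD {u v : NormalWord B N} (i : ℕ) (h : wtLE r u v) :
    wtLE r (u.shiftD i) (v.shiftD i) := by
  rcases h with h | rfl
  · exact Or.inl (shiftD_lt_shiftD i h)
  · exact Or.inr rfl

@[simp] lemma shiftD_zero (u : NormalWord B N) : u.shiftD 0 = u := rfl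

lemma shiftD_shiftD (u : NormalWord B N) (i j : ℕ) :
    (u.shiftD i).shiftD j = u.shiftD (i + j) := by
  simp [NormalWord.shiftD, Nat.add_assoc]

lemma lt_shiftD_self (u : NormalWord B N) {i : ℕ} (hi : 0 < i) : wtLT r u (u.shiftD i) :=
  Or.inr ⟨rfl, Or.inr ⟨rfl, Or.inr ⟨rfl, by simpa [NormalWord.shiftD] using hi⟩⟩⟩

lemma lex_append_of_lex {l₁ l₂ m₁ m₂ : List (B × Fin N)}
    (h : List.Lex (lrel r) l₁ l₂) (hlen : l₁.length = l₂.length) :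
    List.Lex (lrel r) (l₁ ++ m₁) (l₂ ++ m₂) := by
  induction h with
  | nil => simp at hlen
  | cons h ih => exact List.Lex.cons (ih (by simpa using hlen))
  | rel h => exact List.Lex.rel h

end Mono

section SuppInfra

variable {K : Type u} [Field K] {C : Type w} [AddCommGroup C] [Module K C]
variable (bas : Module.Basis (NormalWord B N) K C)

/-- the support of `x` in the basis satisfies `P`. -/
def Supp (x : C) (P : NormalWord B N → Prop) : Prop :=
  ∀ w, bas.repr x w ≠ 0 → P w

variable {bas}

lemma Supp.mono {x : C} {P Q : NormalWord B N → Prop} (h : Supp bas x P)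
    (hPQ : ∀ w, P w → Q w) : Supp bas x Q := fun w hw => hPQ w (h w hw)

lemma supp_zero (P : NormalWord B N → Prop) : Supp bas (0 : C) P := by
  intro w hw; simp at hw

lemma Supp.add {x y : C} {P : NormalWord B N → Prop} (hx : Supp bas x P) (hy : Supp bas y P) :
    Supp bas (x + y) P := by
  intro w hw
  rw [map_add, Finsupp.add_apply] at hw
  by_cases h1 : bas.repr x w = 0
  · exact hy w (by intro h2; rw [h1, h2] at hw; simp at hw)
  · exact hx w h1

lemma Supp.smul {x : C} {P : NormalWord B N → Prop} (c : K) (hx : Supp bas x P) :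
    Supp bas (c • x) P := by
  intro w hw
  rw [map_smul, Finsupp.smul_apply] at hw
  exact hx w (by intro h; rw [h] at hw; simp at hw)

lemma Supp.neg {x : C} {P : NormalWord B N → Prop} (hx : Supp bas x P) :
    Supp bas (-x) P := by
  have := hx.smul (-1 : K); simpa using this

lemma Supp.sub {x y : C} {P : NormalWord B N → Prop} (hx : Supp bas x P) (hy : Supp bas y P) :
    Supp bas (x - y) P := by
  rw [sub_eq_add_neg]; exact hx.add hy.neg

lemma supp_finset_sum {ι : Type*} (s : Finset ι) (g : ι → C) {P : NormalWord B N → Prop}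
    (h : ∀ i ∈ s, Supp bas (g i) P) : Supp bas (∑ i ∈ s, g i) P := by
  classical
  induction s using Finset.induction with
  | empty => simpa using supp_zero P
  | insert _ _ hni ih =>
    rw [Finset.sum_insert hni]
    exact (h _ (Finset.mem_insert_self _ _)).add
      (ih fun i hi => h i (Finset.mem_insert_of_mem hi))

lemma supp_bas (v : NormalWord B N) {P : NormalWord B N → Prop} (hv : P v) :
    Supp bas (bas v) P := by
  intro w hw
  rw [bas.repr_self] at hw
  rcases Finsupp.single_apply_ne_zero.mp hw with ⟨rfl, -⟩
  exact hv

/-- transport a support property through a linear map, knowing its effect on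
basis elements. -/
lemma supp_linear (T : C →ₗ[K] C) {x : C} {P Q : NormalWord B N → Prop}
    (hx : Supp bas x P) (h : ∀ v, P v → Supp bas (T (bas v)) Q) : Supp bas (T x) Q := by
  classical
  have hx' : T x = (bas.repr x).sum fun v c => c • T (bas v) := by
    conv_lhs => rw [← bas.linearCombination_repr x]
    rw [Finsupp.linearCombination_apply, Finsupp.sum, Finsupp.sum, map_sum]
    simp
  rw [hx', Finsupp.sum]
  exact supp_finset_sum _ _ fun v hv =>
    Supp.smul _ (h v (hx v (Finsupp.mem_support_iff.mp hv)))

end SuppInfra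

section Lead

variable {K : Type u} [Field K] {C : Type w} [AddCommGroup C] [Module K C]
variable {bas : Module.Basis (NormalWord B N) K C} {r : B → B → Prop} [IsWellOrder B r]

lemma finset_exists_max (s : Finset (NormalWord B N)) (hs : s.Nonempty) :
    ∃ w ∈ s, ∀ u ∈ s, u = w ∨ wtLT r u w := by
  classical
  induction s using Finset.induction with
  | empty => exact absurd hs (by simp)
  | @insert a s hni ih =>
    rcases s.eq_empty_or_nonempty with rfl | hs'
    · exact ⟨a, by simp⟩
    · obtain ⟨w, hw, hmax⟩ := ih hs'
      rcases wtLT_tricho (r := r) a w with h | heq | h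
      · refine ⟨w, Finset.mem_insert_of_mem hw, ?_⟩
        intro u hu
        rcases Finset.mem_insert.mp hu with rfl | hu
        · exact Or.inr h
        · exact hmax u hu
      · subst heq
        exact ⟨a, Finset.mem_insert_self _ _, fun u hu => by
          rcases Finset.mem_insert.mp hu with rfl | hu
          · exact Or.inl rfl
          · exact hmax u hu⟩
      · refine ⟨a, Finset.mem_insert_self _ _, ?_⟩
        intro u hu
        rcases Finset.mem_insert.mp hu with rfl | hu
        · exact Or.inl rfl
        · rcases hmax u hu with rfl | hu'
          · exact Or.inr h
          · exact Or.inr (wtLT_trans hu' h)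

lemma lead_decomp {x : C} (hx : x ≠ 0) :
    ∃ (w : NormalWord B N) (c : K) (y : C), IsLead bas r x w ∧ c ≠ 0 ∧
      x = c • bas w + y ∧ Supp bas y (fun u => wtLT r u w) := by
  classical
  have hsupp : (bas.repr x).support.Nonempty := by
    rw [Finsupp.support_nonempty_iff]
    intro h
    exact hx (by simpa using congrArg bas.repr.symm h)
  obtain ⟨w, hw, hmax⟩ := finset_exists_max (r := r) _ hsupp
  have hcw : bas.repr x w ≠ 0 := Finsupp.mem_support_iff.mp hw
  refine ⟨w, bas.repr x w, x - bas.repr x w • bas w, ⟨hcw, ?_⟩, hcw, by abel, ?_⟩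
  · intro w' hw'
    exact hmax w' (Finsupp.mem_support_iff.mpr hw')
  · intro u hu
    rw [map_sub, map_smul, bas.repr_self, Finsupp.sub_apply, Finsupp.smul_apply] at hu
    by_cases huw : u = w
    · subst huw; simp at hu
    · rw [Finsupp.single_apply, if_neg (Ne.symm huw)] at hu
      simp only [smul_zero, sub_zero] at hu
      rcases hmax u (Finsupp.mem_support_iff.mpr hu) with rfl | h
      · exact absurd rfl huw
      · exact h

lemma isLead_unique {x : C} {w w' : NormalWord B N}
    (h : IsLead bas r x w) (h' : IsLead bas r x w') : w = w' := by
  rcases h'.2 w h.1 with h1 | h1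
  · exact h1
  · rcases h.2 w' h'.1 with h2 | h2
    · exact h2.symm
    · exact absurd h1 (wtLT_asymm h2)

lemma le_of_isLead {x : C} {w w' : NormalWord B N}
    (hs : Supp bas x (fun u => wtLE r u w)) (h : IsLead bas r x w') : wtLE r w' w :=
  hs w' h.1

end Lead

section Alg

variable {K : Type u} [Field K] {C : Type w} [AddCommGroup C] [Module K C]
variable {F : FreeAssocConformal K B N C} {bas : Module.Basis (NormalWord B N) K C}
variable {r : B → B → Prop}
variable (hbas : ∀ w, bas w = evalWord F w)

include hbas

lemma mulGen (b : B) (n : Fin N) (u : NormalWord B N) :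
    F.alg.mul (n : ℕ) (F.ι b) (bas u) = bas (wcons (b, n) u) := by
  rw [hbas, hbas]; rfl

/-- transport of supports by left multiplication by a generator with index `< N`. -/
lemma supp_mulGen {x : C} {P Q : NormalWord B N → Prop} (b : B) (n : Fin N)
    (hx : Supp bas x P) (h : ∀ v, P v → Q (wcons (b, n) v)) :
    Supp bas (F.alg.mul (n : ℕ) (F.ι b) x) Q := by
  refine supp_linear (F.alg.mul (n : ℕ) (F.ι b)) hx fun v hv => ?_
  rw [mulGen hbas]
  exact supp_bas _ (h v hv)

/-- `D` on a basis word: the leading part raises the final exponent, the rest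
is strictly smaller, with the same letters and last generator. -/
lemma D_bas (u : NormalWord B N) :
    ∃ z, F.alg.D (bas u) = bas (u.shiftD 1) + z ∧
      Supp bas z (fun w => wtLT r w (u.shiftD 1) ∧
        w.body.map Prod.fst = u.body.map Prod.fst ∧ w.last = u.last) := by
  obtain ⟨l, b0, e⟩ := u
  induction l with
  | nil =>
    refine ⟨0, ?_, supp_zero _⟩
    rw [add_zero, hbas, hbas]
    show F.alg.D ((F.alg.D ^ e) (F.ι b0)) = (F.alg.D ^ (e + 1)) (F.ι b0)
    rw [pow_succ', Module.End.mul_apply]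
  | cons a l ih =>
    obtain ⟨b1, n1⟩ := a
    obtain ⟨z', hz', hsz'⟩ := ih
    have hb : bas ⟨(b1, n1) :: l, b0, e⟩ = F.alg.mul (n1 : ℕ) (F.ι b1) (bas ⟨l, b0, e⟩) :=
      (mulGen hbas b1 n1 ⟨l, b0, e⟩).symm
    have hleib := F.alg.leibniz (n1 : ℕ) (F.ι b1) (bas ⟨l, b0, e⟩)
    rcases Nat.eq_zero_or_pos (n1 : ℕ) with hn1 | hn1
    · -- first Leibniz term vanishes
      refine ⟨F.alg.mul (n1 : ℕ) (F.ι b1) z', ?_, ?_⟩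
      · rw [hb, hleib, hn1, F.alg.D_mul_zero, zero_add, ← hn1, hz', map_add, mulGen hbas]
        rfl
      · refine supp_mulGen hbas b1 n1 hsz' fun v hv => ?_
        exact ⟨wcons_lt_wcons _ hv.1, by simp [wcons, hv.2.1], hv.2.2⟩
    · -- first Leibniz term is a decremented basis word
      have hn1' : (n1 : ℕ) - 1 < N := lt_of_le_of_lt (Nat.sub_le _ _) n1.isLt
      set n1' : Fin N := ⟨(n1 : ℕ) - 1, hn1'⟩ with hdefn1'
      have hfirst : F.alg.mul (n1 : ℕ) (F.alg.D (F.ι b1)) (bas ⟨l, b0, e⟩) =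
          -(((n1 : ℕ) : K) • bas (wcons (b1, n1') ⟨l, b0, e⟩)) := by
        rw [F.alg.D_mul _ _ _ hn1, ← mulGen hbas b1 n1' ⟨l, b0, e⟩]
      refine ⟨-(((n1 : ℕ) : K) • bas (wcons (b1, n1') ⟨l, b0, e⟩)) +
          F.alg.mul (n1 : ℕ) (F.ι b1) z', ?_, ?_⟩
      · rw [hb, hleib, hfirst, hz', map_add, mulGen hbas]
        show _ = bas (wcons (b1, n1) (NormalWord.shiftD ⟨l, b0, e⟩ 1)) + _
        abel_nf
      · refine Supp.add ((Supp.smul _ (supp_bas _ ?_)).neg) ?_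
        · refine ⟨lt_of_head (Prod.Lex.right _ ?_) (le_refl _), by simp [wcons], rfl⟩
          show (n1 : ℕ) - 1 < (n1 : ℕ)
          omega
        · refine supp_mulGen hbas b1 n1 hsz' fun v hv => ?_
          exact ⟨wcons_lt_wcons _ hv.1, by simp [wcons, hv.2.1], hv.2.2⟩

/-- transport of supports through `D`. -/
lemma supp_D {x : C} {P Q : NormalWord B N → Prop} (hx : Supp bas x P)
    (h : ∀ v, P v → Q (v.shiftD 1) ∧
      ∀ w, wtLT r w (v.shiftD 1) → w.body.map Prod.fst = v.body.map Prod.fst →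
        w.last = v.last → Q w) :
    Supp bas (F.alg.D x) Q := by
  refine supp_linear F.alg.D hx fun v hv => ?_
  obtain ⟨z, hz, hsz⟩ := D_bas (r := r) hbas v
  rw [hz]
  exact (supp_bas _ (h v hv).1).add (hsz.mono fun w hw => (h v hv).2 w hw.1 hw.2.1 hw.2.2)

variable [IsWellOrder B r]

/-- `D^i` on a polynomial supported `≤ u` (with leading coefficient) -/
lemma Di_lead (u : NormalWord B N) (y : C) (hy : Supp bas y (fun w => wtLT r w u)) (i : ℕ) :
    ∃ z, (F.alg.D ^ i) (bas u + y) = bas (u.shiftD i) + z ∧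
      Supp bas z (fun w => wtLT r w (u.shiftD i)) := by
  induction i with
  | zero => exact ⟨y, by simp, by simpa using hy⟩
  | succ i ih =>
    obtain ⟨z, hz, hsz⟩ := ih
    obtain ⟨z', hz', hsz'⟩ := D_bas (r := r) hbas (u.shiftD i)
    refine ⟨z' + F.alg.D z, ?_, ?_⟩
    · rw [pow_succ', Module.End.mul_apply, hz, map_add, hz', shiftD_shiftD]
      abel
    · have e1 : (u.shiftD i).shiftD 1 = u.shiftD (i + 1) := shiftD_shiftD u i 1
      refine Supp.add (hsz'.mono fun w hw => e1 ▸ hw.1) ?_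
      refine supp_D (r := r) hbas hsz fun v hv => ?_
      have h2 : wtLT r (v.shiftD 1) (u.shiftD (i + 1)) := by
        have := shiftD_lt_shiftD (r := r) 1 hv
        rwa [shiftD_shiftD] at this
      exact ⟨h2, fun w hw _ _ => wtLT_trans hw h2⟩

omit hbas in
/-- reduction of left `D`-powers in a product. -/
lemma mul_Dpow_left (e : ℕ) : ∀ (q : ℕ) (a x : C), ∃ κ : K,
    F.alg.mul q ((F.alg.D ^ e) a) x = κ • F.alg.mul (q - e) a x ∧ (q < e → κ = 0) := by
  induction e with
  | zero => exact fun q a x => ⟨1, by simp, by omega⟩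
  | succ e ih =>
    intro q a x
    have hpow : (F.alg.D ^ (e + 1)) a = F.alg.D ((F.alg.D ^ e) a) := by
      rw [pow_succ', Module.End.mul_apply]
    rcases Nat.eq_zero_or_pos q with rfl | hq
    · refine ⟨0, ?_, fun _ => rfl⟩
      rw [hpow, F.alg.D_mul_zero, zero_smul]
    · obtain ⟨κ', hκ', hcond⟩ := ih (q - 1) a x
      refine ⟨-(q : K) * κ', ?_, ?_⟩
      · rw [hpow, F.alg.D_mul _ _ _ hq, hκ']
        have : q - 1 - e = q - (e + 1) := by omega
        rw [this, smul_smul]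
        ring_nf
        rw [neg_smul]
      · intro h
        rw [hcond (by omega), mul_zero]

end Alg

section AssocInv

variable {K : Type u} [Field K] {C : Type w} [AddCommGroup C] [Module K C]

/-- the inverted form of conformal associativity. -/
lemma assoc_inv (A : AssocConformalAlgebra K C) (n m : ℕ) (a b c : C) :
    A.mul n a (A.mul m b c) =
      ∑ t ∈ Finset.range (n + 1),
        ((n.choose t : K)) • A.mul (m + t) (A.mul (n - t) a b) c := by
  classical
  have h1 : ∀ t : ℕ, A.mul (m + t) (A.mul (n - t) a b) c =
      ∑ s ∈ Finset.range (n - t + 1),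
        ((-1 : K) ^ s * ((n - t).choose s : K)) • A.mul (n - t - s) a (A.mul (m + t + s) b c) :=
    fun t => A.assoc (n - t) (m + t) a b c
  symm
  calc
    ∑ t ∈ Finset.range (n + 1), ((n.choose t : K)) • A.mul (m + t) (A.mul (n - t) a b) c
        = ∑ t ∈ Finset.range (n + 1), ∑ s ∈ Finset.range (n - t + 1),
            ((n.choose t : K) * ((-1 : K) ^ s * ((n - t).choose s : K))) •
              A.mul (n - t - s) a (A.mul (m + t + s) b c) := by
          refine Finset.sum_congr rfl fun t _ => ?_
          rw [h1 t, Finset.smul_sum]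
          exact Finset.sum_congr rfl fun s _ => by rw [smul_smul]
    _ = ∑ k ∈ Finset.range (n + 1), ∑ t ∈ Finset.range (k + 1),
            ((n.choose t : K) * ((-1 : K) ^ (k - t) * ((n - t).choose (k - t) : K))) •
              A.mul (n - k) a (A.mul (m + k) b c) := by
          rw [Finset.sum_sigma' (Finset.range (n + 1)) (fun t => Finset.range (n - t + 1)),
            Finset.sum_sigma' (Finset.range (n + 1)) (fun k => Finset.range (k + 1))]
          refine Finset.sum_nbij' (fun p => ⟨p.1 + p.2, p.1⟩) (fun p => ⟨p.2, p.1 - p.2⟩)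
            ?_ ?_ ?_ ?_ ?_
          · rintro ⟨t, s⟩ hp
            dsimp only
            simp only [Finset.mem_sigma, Finset.mem_range] at hp
            exact Finset.mem_sigma.mpr ⟨Finset.mem_range.mpr (show t + s < n + 1 by omega),
              Finset.mem_range.mpr (show t < t + s + 1 by omega)⟩
          · rintro ⟨k, t⟩ hp
            dsimp only
            simp only [Finset.mem_sigma, Finset.mem_range] at hp
            exact Finset.mem_sigma.mpr ⟨Finset.mem_range.mpr (show t < n + 1 by omega),
              Finset.mem_range.mpr (show k - t < n - t + 1 by omega)⟩
          · rintro ⟨t, s⟩ hp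
            dsimp only
            simp only [Finset.mem_sigma, Finset.mem_range] at hp
            have e1 : t + s - t = s := by omega
            simp [e1]
          · rintro ⟨k, t⟩ hp
            dsimp only
            simp only [Finset.mem_sigma, Finset.mem_range] at hp
            have e1 : t + (k - t) = k := by omega
            simp [e1]
          · rintro ⟨t, s⟩ hp
            dsimp only
            simp only [Finset.mem_sigma, Finset.mem_range] at hp
            have e1 : t + s - t = s := by omega
            have e2 : n - t - s = n - (t + s) := by omega
            have e3 : m + t + s = m + (t + s) := by omega
            rw [e1, e2, e3]
    _ = ∑ k ∈ Finset.range (n + 1),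
          (∑ t ∈ Finset.range (k + 1),
            ((n.choose t : K) * ((-1 : K) ^ (k - t) * ((n - t).choose (k - t) : K)))) •
              A.mul (n - k) a (A.mul (m + k) b c) := by
          exact Finset.sum_congr rfl fun k _ => (Finset.sum_smul).symm
    _ = A.mul n a (A.mul m b c) := by
          have hcoef : ∀ k ∈ Finset.range (n + 1),
              (∑ t ∈ Finset.range (k + 1),
                ((n.choose t : K) * ((-1 : K) ^ (k - t) * ((n - t).choose (k - t) : K))))
              = if k = 0 then 1 else 0 := by
            intro k hk
            rw [Finset.mem_range] at hk
            have hkn : k ≤ n := by omega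
            have step : ∀ t ∈ Finset.range (k + 1),
                ((n.choose t : K) * ((-1 : K) ^ (k - t) * ((n - t).choose (k - t) : K)))
                = ((n.choose k : K)) * ((-1 : K) ^ (k - t) * ((k.choose t : K))) := by
              intro t ht
              rw [Finset.mem_range] at ht
              have hid : n.choose k * k.choose t = n.choose t * (n - t).choose (k - t) :=
                Nat.choose_mul (by omega)
              have hidK : ((n.choose k : K)) * (k.choose t : K)
                  = ((n.choose t : K)) * ((n - t).choose (k - t) : K) := by
                exact_mod_cast congrArg (Nat.cast : ℕ → K) hid
              calc ((n.choose t : K)) * ((-1 : K) ^ (k - t) * ((n - t).choose (k - t) : K))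
                  = ((-1 : K) ^ (k - t)) * (((n.choose t : K)) * ((n - t).choose (k - t) : K)) :=
                    by ring
                _ = ((-1 : K) ^ (k - t)) * (((n.choose k : K)) * (k.choose t : K)) := by
                    rw [← hidK]
                _ = ((n.choose k : K)) * ((-1 : K) ^ (k - t) * ((k.choose t : K))) := by ring
            have halt : (∑ t ∈ Finset.range (k + 1),
                ((-1 : K) ^ (k - t) * ((k.choose t : K)))) = if k = 0 then 1 else 0 := by
              have hrefl := Finset.sum_range_reflect
                (fun t => ((-1 : K) ^ (k - t) * ((k.choose t : K)))) (k + 1)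
              rw [← hrefl]
              have hcg : ∀ j ∈ Finset.range (k + 1),
                  ((-1 : K) ^ (k - (k + 1 - 1 - j)) * ((k.choose (k + 1 - 1 - j) : K)))
                  = ((-1 : K) ^ j * ((k.choose j : K))) := by
                intro j hj
                rw [Finset.mem_range] at hj
                have e1 : k + 1 - 1 - j = k - j := by omega
                have e2 : k - (k - j) = j := by omega
                rw [e1, e2, Nat.choose_symm (by omega)]
              rw [Finset.sum_congr rfl hcg]
              have hZ := Int.alternating_sum_range_choose (n := k)
              have hcast : ((if k = 0 then (1 : ℤ) else 0 : ℤ) : K) = if k = 0 then 1 else 0 := by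
                split_ifs <;> simp
              rw [← hcast, ← hZ]
              push_cast
              exact Finset.sum_congr rfl fun x _ => by ring
            rw [Finset.sum_congr rfl step, ← Finset.mul_sum, halt]
            split_ifs with h
            · subst h; simp
            · rw [mul_zero]
          rw [Finset.sum_congr rfl fun k hk => by rw [hcoef k hk]]
          rw [Finset.sum_eq_single 0]
          · simp
          · intro k _ hk
            rw [if_neg hk, zero_smul]
          · intro h
            exact absurd (Finset.mem_range.mpr (by omega)) h

end AssocInv

section Master

variable {K : Type u} [Field K] {C : Type w} [AddCommGroup C] [Module K C]
variable {F : FreeAssocConformal K B N C} {bas : Module.Basis (NormalWord B N) K C}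
variable {r : B → B → Prop}
variable (hbas : ∀ w, bas w = evalWord F w)

/-- the word `v_(m) c` for `D`-free `v`. -/
def wjoin (v : NormalWord B N) (m : Fin N) (c : NormalWord B N) : NormalWord B N :=
  ⟨v.body ++ (v.last, m) :: c.body, c.last, c.exp⟩

/-- `a_(n) (D x) = D (a_(n) x) + n • a_(n-1) x`. -/
lemma mul_D_right (n : ℕ) (a x : C) :
    F.alg.mul n a (F.alg.D x) =
      F.alg.D (F.alg.mul n a x) + (n : K) • F.alg.mul (n - 1) a x := by
  have h := F.alg.leibniz n a x
  rcases Nat.eq_zero_or_pos n with rfl | hn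
  · rw [F.alg.D_mul_zero, zero_add] at h
    rw [← h]
    simp
  · rw [F.alg.D_mul _ _ _ hn] at h
    rw [h]
    abel

include hbas

lemma bas_nil_pow (bl : B) (e : ℕ) :
    bas ⟨[], bl, e⟩ = (F.alg.D ^ e) (F.ι bl) := by
  rw [hbas]; rfl

lemma bas_nil (bl : B) : bas ⟨[], bl, 0⟩ = F.ι bl := by
  rw [bas_nil_pow hbas, pow_zero, Module.End.one_apply]

lemma bas_nil_succ (bl : B) (j : ℕ) :
    bas ⟨[], bl, j + 1⟩ = F.alg.D (bas ⟨[], bl, j⟩) := by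
  rw [bas_nil_pow hbas, bas_nil_pow hbas, pow_succ', Module.End.mul_apply]

/-- words of `(ι b)_(q) (D^j c2)` have at most one body letter. -/
lemma hl00 (b c2 : B) : ∀ (j q : ℕ), N ≤ q →
    Supp bas (F.alg.mul q (F.ι b) (bas ⟨[], c2, j⟩)) (fun w => w.body.length ≤ 1) := by
  intro j
  induction j with
  | zero =>
    intro q hq
    rw [bas_nil hbas, F.loc b c2 q hq]
    exact supp_zero _
  | succ j ih =>
    intro q hq
    rw [bas_nil_succ hbas, mul_D_right]
    refine Supp.add ?_ (Supp.smul _ ?_)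
    · refine supp_D (r := fun _ _ => False) hbas (ih q hq) fun v hv => ?_
      refine ⟨by simpa [NormalWord.shiftD] using hv, ?_⟩
      intro w _ hmap _
      have hlen : w.body.length = v.body.length := by
        have := congrArg List.length hmap
        simpa using this
      omega
    · rcases Nat.lt_or_ge (q - 1) N with hlt | hge
      · have heq : F.alg.mul (q - 1) (F.ι b) (bas ⟨[], c2, j⟩)
            = bas (wcons (b, ⟨q - 1, hlt⟩) ⟨[], c2, j⟩) := mulGen hbas b ⟨q - 1, hlt⟩ _
        rw [heq]
        exact supp_bas _ (by simp [wcons])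
      · exact ih (q - 1) hge

/-- master length bound: every word of `v_(q) c` has at most
`|v| + |c| + 1` body letters. -/
lemma mul_len_bound : ∀ (n : ℕ) (c : NormalWord B N), c.body.length = n →
    ∀ (v : NormalWord B N) (q : ℕ),
    Supp bas (F.alg.mul q (bas v) (bas c))
      (fun w => w.body.length ≤ v.body.length + c.body.length + 1) := by
  intro n
  induction n using Nat.strong_induction_on with
  | _ n ihn =>
    intro c hc
    -- one-generator products, arbitrary index
    have hl0 : ∀ (b : B) (q : ℕ),
        Supp bas (F.alg.mul q (F.ι b) (bas c)) (fun w => w.body.length ≤ c.body.length + 1) := by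
      intro b q
      rcases Nat.lt_or_ge q N with hlt | hge
      · have heq : F.alg.mul q (F.ι b) (bas c) = bas (wcons (b, ⟨q, hlt⟩) c) :=
          mulGen hbas b ⟨q, hlt⟩ c
        rw [heq]
        exact supp_bas _ (by simp [wcons])
      · -- q ≥ N
        obtain ⟨cb, cl, ce⟩ := c
        cases cb with
        | nil =>
          exact (hl00 hbas b cl ce q hge).mono (fun w hw => by omega)
        | cons a c' =>
          obtain ⟨c1, kk⟩ := a
          have hsplit : bas ⟨(c1, kk) :: c', cl, ce⟩
              = F.alg.mul (kk : ℕ) (F.ι c1) (bas ⟨c', cl, ce⟩) :=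
            (mulGen hbas c1 kk ⟨c', cl, ce⟩).symm
          rw [hsplit, assoc_inv]
          refine supp_finset_sum _ _ fun t _ => Supp.smul _ ?_
          rcases Nat.lt_or_ge (q - t) N with hlt2 | hge2
          · have h2 : F.alg.mul (q - t) (F.ι b) (F.ι c1)
                = bas ⟨[(b, ⟨q - t, hlt2⟩)], c1, 0⟩ := by
              rw [← bas_nil hbas c1]
              exact mulGen hbas b ⟨q - t, hlt2⟩ ⟨[], c1, 0⟩
            rw [h2]
            have hrec := ihn c'.length
              (by simp only [List.length_cons] at hc; omega) ⟨c', cl, ce⟩ rfl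
              ⟨[(b, ⟨q - t, hlt2⟩)], c1, 0⟩ ((kk : ℕ) + t)
            refine hrec.mono fun w hw => ?_
            simp only [List.length_cons, List.length_nil] at hw ⊢
            omega
          · rw [F.loc b c1 _ hge2]
            have h0 : F.alg.mul ((kk : ℕ) + t) (0 : C) (bas ⟨c', cl, ce⟩) = 0 := by
              rw [map_zero, LinearMap.zero_apply]
            rw [h0]
            exact supp_zero _
    -- now induct on the body of `v`
    rintro ⟨vb, vl, ve⟩
    induction vb generalizing ve with
    | nil =>
      intro q
      rw [bas_nil_pow hbas]
      obtain ⟨κ, hκ, -⟩ := mul_Dpow_left (F := F) ve q (F.ι vl) (bas c)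
      rw [hκ]
      exact Supp.smul _ ((hl0 vl (q - ve)).mono fun w hw => by omega)
    | cons a l ihl =>
      intro q
      obtain ⟨b1, n1⟩ := a
      have hsplit : bas ⟨(b1, n1) :: l, vl, ve⟩
          = F.alg.mul (n1 : ℕ) (F.ι b1) (bas ⟨l, vl, ve⟩) :=
        (mulGen hbas b1 n1 ⟨l, vl, ve⟩).symm
      rw [hsplit, F.alg.assoc]
      refine supp_finset_sum _ _ fun t _ => Supp.smul _ ?_
      have hlt : (n1 : ℕ) - t < N := lt_of_le_of_lt (Nat.sub_le _ _) n1.isLt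
      have hmono := ihl ve (q + t)
      refine supp_mulGen hbas b1 ⟨(n1 : ℕ) - t, hlt⟩ hmono fun w hw => ?_
      simp only [wcons, List.length_cons] at hw ⊢
      omega


/-- the leading-term computation: for a `D`-free word `v` and `m < N`,
`v_(m) c = [v_(m) c] + smaller`; for non-`D`-free `v` everything is smaller. -/
lemma mul_lead (c : NormalWord B N) (m : Fin N) :
    ∀ (vb : List (B × Fin N)) (vl : B) (ve : ℕ),
    ∃ y, F.alg.mul (m : ℕ) (bas ⟨vb, vl, ve⟩) (bas c) =
      (if ve = 0 then bas (wjoin ⟨vb, vl, 0⟩ m c) else 0) + y ∧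
      Supp bas y (fun w => wtLT r w (wjoin ⟨vb, vl, 0⟩ m c)) := by
  intro vb
  induction vb with
  | nil =>
    intro vl ve
    rcases Nat.eq_zero_or_pos ve with rfl | hve
    · refine ⟨0, ?_, supp_zero _⟩
      rw [if_pos rfl, add_zero, bas_nil hbas, mulGen hbas vl m c]
      rfl
    · rw [bas_nil_pow hbas]
      obtain ⟨κ, hκ, hcond⟩ := mul_Dpow_left (F := F) ve (m : ℕ) (F.ι vl) (bas c)
      rcases Nat.lt_or_ge (m : ℕ) ve with hlt | hge
      · refine ⟨0, ?_, supp_zero _⟩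
        rw [hκ, hcond hlt, zero_smul, if_neg (by omega), add_zero]
      · have hlt2 : (m : ℕ) - ve < N := lt_of_le_of_lt (Nat.sub_le _ _) m.isLt
        refine ⟨κ • bas (wcons (vl, ⟨(m : ℕ) - ve, hlt2⟩) c), ?_, ?_⟩
        · rw [hκ, if_neg (by omega), zero_add, mulGen hbas vl ⟨(m : ℕ) - ve, hlt2⟩ c]
        · refine Supp.smul _ (supp_bas _ ?_)
          refine lt_of_head (Prod.Lex.right _ ?_) (le_refl _)
          show (m : ℕ) - ve < (m : ℕ)
          omega
  | cons a l ih =>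
    intro vl ve
    obtain ⟨b1, n1⟩ := a
    obtain ⟨y', hy', hsy'⟩ := ih vl ve
    have hsplit : bas ⟨(b1, n1) :: l, vl, ve⟩
        = F.alg.mul (n1 : ℕ) (F.ι b1) (bas ⟨l, vl, ve⟩) :=
      (mulGen hbas b1 n1 ⟨l, vl, ve⟩).symm
    refine ⟨(∑ t ∈ Finset.range (n1 : ℕ),
        ((-1 : K) ^ (t + 1) * ((n1 : ℕ).choose (t + 1) : K)) •
          F.alg.mul ((n1 : ℕ) - (t + 1)) (F.ι b1)
            (F.alg.mul ((m : ℕ) + (t + 1)) (bas ⟨l, vl, ve⟩) (bas c))) +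
        F.alg.mul (n1 : ℕ) (F.ι b1) y', ?_, ?_⟩
    · rw [hsplit, F.alg.assoc, Finset.sum_range_succ']
      simp only [Nat.add_zero, Nat.sub_zero, pow_zero, Nat.choose_zero_right, Nat.cast_one,
        one_mul, one_smul]
      rw [hy', map_add]
      rcases Nat.eq_zero_or_pos ve with rfl | hve
      · rw [if_pos rfl, if_pos rfl, mulGen hbas b1 n1 (wjoin ⟨l, vl, 0⟩ m c)]
        have hw : wcons (b1, n1) (wjoin ⟨l, vl, 0⟩ m c) = wjoin ⟨(b1, n1) :: l, vl, 0⟩ m c := rfl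
        rw [hw]
        abel
      · rw [if_neg (by omega), if_neg (by omega), map_zero]
        abel
    · refine Supp.add (supp_finset_sum _ _ fun t ht => Supp.smul _ ?_) ?_
      · rw [Finset.mem_range] at ht
        have hlt : (n1 : ℕ) - (t + 1) < N := lt_of_le_of_lt (Nat.sub_le _ _) n1.isLt
        have hlb := mul_len_bound hbas c.body.length c rfl ⟨l, vl, ve⟩ ((m : ℕ) + (t + 1))
        refine supp_mulGen hbas b1 ⟨(n1 : ℕ) - (t + 1), hlt⟩ hlb fun u hu => ?_
        refine lt_of_head (Prod.Lex.right _ ?_) ?_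
        · show (n1 : ℕ) - (t + 1) < (n1 : ℕ)
          omega
        · show u.body.length ≤ (l ++ (vl, m) :: c.body).length
          rw [List.length_append, List.length_cons]
          simp only [List.length_cons] at hu
          omega
      · refine supp_mulGen hbas b1 n1 hsy' fun u hu => ?_
        exact wcons_lt_wcons _ hu

end Master

section NSWord

variable {K : Type u} [Field K] {C : Type w} [AddCommGroup C] [Module K C]
variable {F : FreeAssocConformal K B N C} {bas : Module.Basis (NormalWord B N) K C}
variable {r : B → B → Prop} {S : Set C}
variable (hbas : ∀ w, bas w = evalWord F w)

include hbas

lemma evalAux_add (p : List (B × Fin N)) (x y : C) :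
    evalAux F p (x + y) = evalAux F p x + evalAux F p y := by
  induction p with
  | nil => rfl
  | cons a p ih =>
    show F.alg.mul ((a.2 : ℕ)) (F.ι a.1) (evalAux F p (x + y)) = _
    rw [ih, map_add]
    rfl

lemma evalAux_bas (p : List (B × Fin N)) (u : NormalWord B N) :
    evalAux F p (bas u) = bas (wpre p u) := by
  induction p with
  | nil => rfl
  | cons a p ih =>
    show F.alg.mul ((a.2 : ℕ)) (F.ι a.1) (evalAux F p (bas u)) = _
    rw [ih, mulGen hbas a.1 a.2 (wpre p u)]
    rfl

lemma supp_evalAux (p : List (B × Fin N)) {x : C} {P : NormalWord B N → Prop}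
    (hx : Supp bas x P) :
    Supp bas (evalAux F p x) (fun u => ∃ v, P v ∧ u = wpre p v) := by
  induction p with
  | nil => exact hx.mono fun v hv => ⟨v, hv, rfl⟩
  | cons a p ih =>
    show Supp bas (F.alg.mul ((a.2 : ℕ)) (F.ι a.1) (evalAux F p x)) _
    refine supp_mulGen hbas a.1 a.2 ih fun v hv => ?_
    obtain ⟨v₀, h0, rfl⟩ := hv
    exact ⟨v₀, h0, rfl⟩

omit hbas in
lemma monic_split {s : C} {sw : NormalWord B N} (hl : IsLead bas r s sw)
    (hc : bas.repr s sw = 1) :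
    ∃ y, s = bas sw + y ∧ Supp bas y (fun u => wtLT r u sw) := by
  classical
  refine ⟨s - bas sw, by abel, ?_⟩
  intro u hu
  rw [map_sub, bas.repr_self, Finsupp.sub_apply] at hu
  by_cases huw : u = sw
  · subst huw
    rw [hc, Finsupp.single_eq_same] at hu
    simp at hu
  · rw [Finsupp.single_apply, if_neg (Ne.symm huw)] at hu
    rw [sub_zero] at hu
    rcases hl.2 u hu with rfl | h
    · exact absurd rfl huw
    · exact h

omit hbas in
/-- `v < sw` (with `sw` `D`-free) implies `[v⁰ m c] < [sw m c]`. -/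
lemma wjoin_mono {v sw : NormalWord B N} (hfree : sw.exp = 0) (m : Fin N)
    (c : NormalWord B N) (hv : wtLT r v sw) :
    wtLT r (wjoin ⟨v.body, v.last, 0⟩ m c) (wjoin sw m c) := by
  rcases hv with h | ⟨hlen, h | ⟨hbody, h | ⟨hlast, h⟩⟩⟩
  · refine Or.inl ?_
    simp only [wjoin, List.length_append, List.length_cons]
    omega
  · refine Or.inr ⟨?_, Or.inl ?_⟩
    · simp only [wjoin, List.length_append, List.length_cons]
      omega
    · exact lex_append_of_lex h hlen
  · refine Or.inr ⟨?_, Or.inl ?_⟩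
    · simp only [wjoin, List.length_append, List.length_cons, hbody]
    · show List.Lex _ (v.body ++ (v.last, m) :: c.body) (sw.body ++ (sw.last, m) :: c.body)
      rw [hbody]
      exact List.Lex.append_left _ (List.Lex.rel (Prod.Lex.left _ _ h)) _
  · rw [hfree] at h
    exact absurd h (Nat.not_lt_zero _)

/-- the value of a normal `S`-word of the second kind. -/
lemma ns_second [IsWellOrder B r] (p : List (B × Fin N)) {s : C} {sw : NormalWord B N}
    (hl : IsLead bas r s sw) (hc : bas.repr s sw = 1) (i : ℕ) :
    ∃ y, evalAux F p ((F.alg.D ^ i) s) = bas (wpre p (sw.shiftD i)) + y ∧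
      Supp bas y (fun u => wtLT r u (wpre p (sw.shiftD i))) := by
  obtain ⟨y0, hy0, hs0⟩ := monic_split hl hc
  obtain ⟨z, hz, hsz⟩ := Di_lead (r := r) hbas sw y0 hs0 i
  rw [hy0, hz, evalAux_add hbas, evalAux_bas hbas]
  refine ⟨evalAux F p z, rfl, ?_⟩
  refine (supp_evalAux hbas p hsz).mono fun u hu => ?_
  obtain ⟨v, hv, rfl⟩ := hu
  exact wpre_lt_wpre p hv

/-- the value of a normal `S`-word of the first kind. -/
lemma ns_first [IsWellOrder B r] (p : List (B × Fin N)) {s : C} {sw : NormalWord B N}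
    (hl : IsLead bas r s sw) (hc : bas.repr s sw = 1) (hfree : sw.exp = 0)
    (m : Fin N) (c : NormalWord B N) :
    ∃ y, evalAux F p (F.alg.mul (m : ℕ) s (evalWord F c)) =
      bas (wpre p (wjoin sw m c)) + y ∧
      Supp bas y (fun u => wtLT r u (wpre p (wjoin sw m c))) := by
  obtain ⟨y0, hy0, hs0⟩ := monic_split hl hc
  have hev : evalWord F c = bas c := (hbas c).symm
  obtain ⟨swb, swl, swe⟩ := sw
  simp only at hfree
  subst hfree
  obtain ⟨y1, hy1, hsy1⟩ := mul_lead (r := r) hbas c m swb swl 0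
  rw [if_pos rfl] at hy1
  have hs0' : Supp bas (F.alg.mul (m : ℕ) y0 (bas c))
      (fun u => wtLT r u (wjoin ⟨swb, swl, 0⟩ m c)) := by
    have hT : F.alg.mul (m : ℕ) y0 (bas c)
        = ((F.alg.mul (m : ℕ)).flip (bas c)) y0 := rfl
    rw [hT]
    refine supp_linear ((F.alg.mul (m : ℕ)).flip (bas c)) hs0 fun v hv => ?_
    have hTv : ((F.alg.mul (m : ℕ)).flip (bas c)) (bas v)
        = F.alg.mul (m : ℕ) (bas v) (bas c) := rfl
    rw [hTv]
    obtain ⟨vb, vl, ve⟩ := v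
    obtain ⟨y2, hy2, hsy2⟩ := mul_lead (r := r) hbas c m vb vl ve
    rw [hy2]
    have hmono : wtLT r (wjoin ⟨vb, vl, 0⟩ m c) (wjoin ⟨swb, swl, 0⟩ m c) :=
      wjoin_mono rfl m c hv
    refine Supp.add ?_ (hsy2.mono fun u hu => wtLT_trans hu hmono)
    rcases Nat.eq_zero_or_pos ve with rfl | hve
    · rw [if_pos rfl]
      exact supp_bas _ hmono
    · rw [if_neg (by omega)]
      exact supp_zero _
  have hmain : F.alg.mul (m : ℕ) s (evalWord F c)
      = bas (wjoin ⟨swb, swl, 0⟩ m c) + (y1 + F.alg.mul (m : ℕ) y0 (bas c)) := by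
    rw [hev, hy0, map_add, LinearMap.add_apply, hy1]
    abel
  rw [hmain, evalAux_add hbas, evalAux_bas hbas]
  refine ⟨evalAux F p (y1 + F.alg.mul (m : ℕ) y0 (bas c)), rfl, ?_⟩
  refine (supp_evalAux hbas p (hsy1.add hs0')).mono fun u hu => ?_
  obtain ⟨v, hv, rfl⟩ := hu
  exact wpre_lt_wpre p hv

/-- every normal `S`-word (w.r.t. a monic set) splits as its formal leading
word plus strictly smaller terms. -/
lemma nsword_split [IsWellOrder B r] (hS : MonicSet bas r S) {g : C} {w : NormalWord B N}
    (h : IsNSWord F bas r S g w) :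
    ∃ y, g = bas w + y ∧ Supp bas y (fun u => wtLT r u w) := by
  cases h with
  | first p s hs sw hlead hfree m c =>
    obtain ⟨sw', hlead', hc'⟩ := hS s hs
    have hswe : sw' = sw := isLead_unique hlead' hlead
    subst hswe
    obtain ⟨y, hy, hsy⟩ := ns_first hbas p hlead' hc' hfree m c
    have hww : wpre p (wjoin sw' m c) =
        (⟨p ++ sw'.body ++ (sw'.last, m) :: c.body, c.last, c.exp⟩ : NormalWord B N) := by
      simp [wpre, wjoin, List.append_assoc]
    rw [hww] at hy hsy
    exact ⟨y, hy, hsy⟩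
  | second p s hs sw hlead i =>
    obtain ⟨sw', hlead', hc'⟩ := hS s hs
    have hswe : sw' = sw := isLead_unique hlead' hlead
    subst hswe
    obtain ⟨y, hy, hsy⟩ := ns_second hbas p hlead' hc' i
    exact ⟨y, hy, hsy⟩

end NSWord









section Main

variable {K : Type u} [Field K] {C : Type w} [AddCommGroup C] [Module K C]
variable (F : FreeAssocConformal K B N C) (bas : Module.Basis (NormalWord B N) K C)
variable (r : B → B → Prop) (S : Set C)

/-- decomposition into normal `S`-words and irreducible words bounded by `w`. -/
def Decomp (x : C) (w : NormalWord B N) : Prop :=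
  ∃ (n₁ n₂ : ℕ) (α : Fin n₁ → K) (g : Fin n₁ → C) (wd : Fin n₁ → NormalWord B N)
    (β : Fin n₂ → K) (u : Fin n₂ → NormalWord B N),
    x = (∑ i, α i • g i) + ∑ j, β j • evalWord F (u j) ∧
    (∀ i, IsNSWord F bas r S (g i) (wd i) ∧ wtLE r (wd i) w) ∧
    (∀ j, u j ∈ Irr F bas r S ∧ wtLE r (u j) w)

variable {F bas r S}

lemma decomp_zero (w : NormalWord B N) : Decomp F bas r S 0 w :=
  ⟨0, 0, fun i => i.elim0, fun i => i.elim0, fun i => i.elim0, fun j => j.elim0,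
    fun j => j.elim0, by simp, fun i => i.elim0, fun j => j.elim0⟩

lemma decomp_mono [IsWellOrder B r] {x : C} {w w' : NormalWord B N}
    (h : Decomp F bas r S x w) (hw : wtLE r w w') : Decomp F bas r S x w' := by
  obtain ⟨n₁, n₂, α, g, wd, β, u, heq, h1, h2⟩ := h
  exact ⟨n₁, n₂, α, g, wd, β, u, heq,
    fun i => ⟨(h1 i).1, wtLE_trans (h1 i).2 hw⟩,
    fun j => ⟨(h2 j).1, wtLE_trans (h2 j).2 hw⟩⟩

lemma decomp_add {x y : C} {w : NormalWord B N}
    (hx : Decomp F bas r S x w) (hy : Decomp F bas r S y w) :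
    Decomp F bas r S (x + y) w := by
  obtain ⟨n₁, n₂, α, g, wd, β, u, heq, h1, h2⟩ := hx
  obtain ⟨m₁, m₂, α', g', wd', β', u', heq', h1', h2'⟩ := hy
  refine ⟨n₁ + m₁, n₂ + m₂, Fin.append α α', Fin.append g g', Fin.append wd wd',
    Fin.append β β', Fin.append u u', ?_, ?_, ?_⟩
  · simp only [Fin.sum_univ_add, Fin.append_left, Fin.append_right]
    rw [heq, heq']
    abel
  · intro i
    induction i using Fin.addCases with
    | left i => simpa only [Fin.append_left] using h1 i
    | right i => simpa only [Fin.append_right] using h1' i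
  · intro j
    induction j using Fin.addCases with
    | left j => simpa only [Fin.append_left] using h2 j
    | right j => simpa only [Fin.append_right] using h2' j

lemma decomp_ns {g : C} {w : NormalWord B N} (hg : IsNSWord F bas r S g w) (c : K) :
    Decomp F bas r S (c • g) w :=
  ⟨1, 0, fun _ => c, fun _ => g, fun _ => w, fun j => j.elim0, fun j => j.elim0,
    by simp, fun _ => ⟨hg, wtLE_refl _⟩, fun j => j.elim0⟩

lemma decomp_irr (hbas : ∀ w, bas w = evalWord F w) {w : NormalWord B N}
    (hirr : w ∈ Irr F bas r S) (c : K) : Decomp F bas r S (c • bas w) w :=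
  ⟨0, 1, fun i => i.elim0, fun i => i.elim0, fun i => i.elim0, fun _ => c, fun _ => w,
    by simp [hbas w], fun i => i.elim0, fun _ => ⟨hirr, wtLE_refl _⟩⟩

lemma decomp_main [IsWellOrder B r] (hbas : ∀ w, bas w = evalWord F w)
    (hS : MonicSet bas r S) :
    ∀ w : NormalWord B N, ∀ x : C, Supp bas x (fun u => wtLE r u w) →
      Decomp F bas r S x w := by
  intro w
  induction w using (wtLT_wf (r := r) (N := N)).induction with
  | _ w ihw =>
    intro x hx
    by_cases hx0 : x = 0
    · subst hx0
      exact decomp_zero w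
    obtain ⟨w₀, cc, y, hld, hc0, hdec, hsy⟩ := lead_decomp (bas := bas) (r := r) hx0
    rcases hx w₀ hld.1 with hlt | heq
    · -- the lead is strictly below `w`: recurse
      have hxw₀ : Supp bas x (fun u => wtLE r u w₀) := by
        intro u hu
        rcases hld.2 u hu with rfl | h
        · exact Or.inr rfl
        · exact Or.inl h
      exact decomp_mono (ihw w₀ hlt x hxw₀) (Or.inl hlt)
    · subst heq
      have hrest : ∀ z : C, Supp bas z (fun u => wtLT r u w₀) → Decomp F bas r S z w₀ := by
        intro z hz
        by_cases hz0 : z = 0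
        · subst hz0
          exact decomp_zero w₀
        obtain ⟨w₁, c₁, y₁, hld₁, -, -, -⟩ := lead_decomp (bas := bas) (r := r) hz0
        have hw₁ : wtLT r w₁ w₀ := hz w₁ hld₁.1
        refine decomp_mono (ihw w₁ hw₁ z ?_) (Or.inl hw₁)
        intro u hu
        rcases hld₁.2 u hu with rfl | h
        · exact Or.inr rfl
        · exact Or.inl h
      by_cases hirr : w₀ ∈ Irr F bas r S
      · have h3 := decomp_add (decomp_irr hbas hirr cc) (hrest y hsy)
        rwa [← hdec] at h3
      · have hex : ∃ g, IsNSWord F bas r S g w₀ := by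
          by_contra hno
          exact hirr (by simpa [Irr, Set.mem_setOf_eq] using hno)
        obtain ⟨g, hg⟩ := hex
        obtain ⟨d, hgd, hsd⟩ := nsword_split hbas hS hg
        have h1 : Decomp F bas r S (cc • g) w₀ := decomp_ns hg cc
        have h2 : Decomp F bas r S (y - cc • d) w₀ := hrest _ (hsy.sub (hsd.smul cc))
        have h3 := decomp_add h1 h2
        have hx2 : x = cc • g + (y - cc • d) := by
          rw [hgd, hdec, smul_add]
          abel
        rwa [← hx2] at h3

end Main

end CDaux

theorem decomposition_normal_SWords_and_irreducibles {K : Type u} [Field K] [CharZero K]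
    {B : Type v} {N : ℕ} {C : Type w} [AddCommGroup C] [Module K C]
    (F : FreeAssocConformal K B N C) (bas : Module.Basis (NormalWord B N) K C)
    (hbas : ∀ w, bas w = evalWord F w)
    (r : B → B → Prop) (hr : IsWellOrder B r)
    (S : Set C) (hS : MonicSet bas r S) (f : C) :
    ∃ (n₁ n₂ : ℕ) (α : Fin n₁ → K) (g : Fin n₁ → C) (wd : Fin n₁ → NormalWord B N)
      (β : Fin n₂ → K) (u : Fin n₂ → NormalWord B N),
      f = (∑ i, α i • g i) + ∑ j, β j • evalWord F (u j) ∧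
      (∀ i, IsNSWord F bas r S (g i) (wd i) ∧
        ∀ fw, IsLead bas r f fw → wtLE r (wd i) fw) ∧
      (∀ j, u j ∈ Irr F bas r S ∧
        ∀ fw, IsLead bas r f fw → wtLE r (u j) fw) := by
  haveI := hr
  by_cases hf : f = 0
  · subst hf
    exact ⟨0, 0, fun i => i.elim0, fun i => i.elim0, fun i => i.elim0, fun j => j.elim0,
      fun j => j.elim0, by simp, fun i => i.elim0, fun j => j.elim0⟩
  · obtain ⟨w₀, c, y, hld, -, -, -⟩ := CDaux.lead_decomp (bas := bas) (r := r) hf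
    have hsupp : CDaux.Supp bas f (fun u => wtLE r u w₀) := by
      intro u hu
      rcases hld.2 u hu with rfl | h
      · exact Or.inr rfl
      · exact Or.inl h
    obtain ⟨n₁, n₂, α, g, wd, β, u, heq, h1, h2⟩ :=
      CDaux.decomp_main hbas hS w₀ f hsupp
    refine ⟨n₁, n₂, α, g, wd, β, u, heq, ?_, ?_⟩
    · intro i
      refine ⟨(h1 i).1, fun fw hfw => ?_⟩
      rw [CDaux.isLead_unique hfw hld]
      exact (h1 i).2
    · intro j
      refine ⟨(h2 j).1, fun fw hfw => ?_⟩
      rw [CDaux.isLead_unique hfw hld]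
      exact (h2 j).2
end

section
/- In the free associative conformal algebra C({L_i}_{i∈ℤ}, N = 2) over ℂ, the set S₁ = { L_{i(0)} L_j − L_{0(0)} L_{i+j} (i ≠ 0), L_{i(1)} L_j + L_{i+j} : i, j ∈ ℤ } generates the same ideal as the set S^{(−)} = { L_{i(0)} L_j + L_{j(1)} D L_i − 2 L_{j(0)} L_i + D L_{i+j}, L_{i(1)} L_j + L_{j(1)} L_i + 2 L_{i+j} : i, j ∈ ℤ } of defining relations of the universal enveloping algebra of the loop Virasoro Lie conformal algebra. -/
/-!  Basic definitions for (associative) conformal algebras, the free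
associative conformal algebra `C(B,N)`, normal words, the weight ordering,
normal `S`-words, compositions and Gröbner–Shirshov bases, following
Ni–Chen, "A new Composition-Diamond lemma for associative conformal algebras". -/

universe u v w

open scoped BigOperators

variable {K : Type u} [Field K] {C : Type w} [AddCommGroup C] [Module K C]

variable {B : Type v} {N : ℕ}

section LoopVirasoro

variable {C : Type w} [AddCommGroup C] [Module ℂ C]

/-- The relations `S₁` for the loop Virasoro enveloping algebra. -/
def loopVirS1 (F : FreeAssocConformal ℂ ℤ 2 C) : Set C :=
  {x | (∃ i j : ℤ, i ≠ 0 ∧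
          x = F.alg.mul 0 (F.ι i) (F.ι j) - F.alg.mul 0 (F.ι 0) (F.ι (i + j))) ∨
       (∃ i j : ℤ, x = F.alg.mul 1 (F.ι i) (F.ι j) + F.ι (i + j))}

/-- The defining relations `S^{(−)}` of the universal enveloping algebra of the
loop Virasoro Lie conformal algebra. -/
def loopVirSminus (F : FreeAssocConformal ℂ ℤ 2 C) : Set C :=
  {x | (∃ i j : ℤ,
          x = F.alg.mul 0 (F.ι i) (F.ι j) + F.alg.mul 1 (F.ι j) (F.alg.D (F.ι i))
              - (2 : ℂ) • F.alg.mul 0 (F.ι j) (F.ι i) + F.alg.D (F.ι (i + j))) ∨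
       (∃ i j : ℤ,
          x = F.alg.mul 1 (F.ι i) (F.ι j) + F.alg.mul 1 (F.ι j) (F.ι i)
              + (2 : ℂ) • F.ι (i + j))}


namespace LoopVir

variable {C : Type w} [AddCommGroup C] [Module ℂ C] (F : FreeAssocConformal ℂ ℤ 2 C)

private lemma inIdeal_neg {S : Set C} {x : C} (h : InIdeal F S x) :
    InIdeal F S (-x) := by
  have h2 := InIdeal.smul (-1 : ℂ) h
  simpa using h2

private lemma inIdeal_sub {S : Set C} {x y : C} (hx : InIdeal F S x)
    (hy : InIdeal F S y) : InIdeal F S (x - y) := by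
  rw [sub_eq_add_neg]; exact hx.add (inIdeal_neg F hy)

private lemma ideal_mono {S T : Set C} (h : ∀ s ∈ S, InIdeal F T s) :
    ∀ {x : C}, InIdeal F S x → InIdeal F T x := by
  intro x hx
  induction hx with
  | mem hs => exact h _ hs
  | zero => exact .zero
  | add hx hy ihx ihy => exact ihx.add ihy
  | smul a hx ih => exact InIdeal.smul a ih
  | deriv hx ih => exact ih.deriv
  | mul_left n y hx ih => exact InIdeal.mul_left n y ih
  | mul_right n y hx ih => exact InIdeal.mul_right n y ih

private lemma inIdeal_congr {S : Set C} {x y : C} (e : x = y) (h : InIdeal F S y) :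
    InIdeal F S x := e ▸ h

private lemma loc2 (i j : ℤ) : F.alg.mul 2 (F.ι i) (F.ι j) = 0 := F.loc i j 2 le_rfl

private lemma Dmul1 (a b : C) :
    F.alg.mul 1 (F.alg.D a) b = -(F.alg.mul 0 a b) := by
  have h := F.alg.D_mul 1 a b one_pos
  simpa using h

private lemma Dmul2 (a b : C) :
    F.alg.mul 2 (F.alg.D a) b = -((2 : ℂ) • F.alg.mul 1 a b) := by
  have h := F.alg.D_mul 2 a b (by norm_num)
  simpa using h

private lemma Dmul3 (a b : C) :
    F.alg.mul 3 (F.alg.D a) b = -((3 : ℂ) • F.alg.mul 2 a b) := by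
  have h := F.alg.D_mul 3 a b (by norm_num)
  simpa using h

private lemma assoc10 (a b c : C) :
    F.alg.mul 0 (F.alg.mul 1 a b) c =
      F.alg.mul 1 a (F.alg.mul 0 b c) - F.alg.mul 0 a (F.alg.mul 1 b c) := by
  have h := F.alg.assoc 1 0 a b c
  norm_num [Finset.sum_range_succ] at h
  rw [h]; module

private lemma assoc12 (a b c : C) :
    F.alg.mul 2 (F.alg.mul 1 a b) c =
      F.alg.mul 1 a (F.alg.mul 2 b c) - F.alg.mul 0 a (F.alg.mul 3 b c) := by
  have h := F.alg.assoc 1 2 a b c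
  norm_num [Finset.sum_range_succ] at h
  rw [h]; module

private lemma assoc02 (a b c : C) :
    F.alg.mul 2 (F.alg.mul 0 a b) c = F.alg.mul 0 a (F.alg.mul 2 b c) := by
  have h := F.alg.assoc 0 2 a b c
  norm_num [Finset.sum_range_succ] at h
  rw [h]

private lemma Pmem (i j : ℤ) : InIdeal F (loopVirSminus F)
    (F.alg.mul 0 (F.ι i) (F.ι j) + F.alg.mul 1 (F.ι j) (F.alg.D (F.ι i))
      - (2 : ℂ) • F.alg.mul 0 (F.ι j) (F.ι i) + F.alg.D (F.ι (i + j))) :=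
  InIdeal.mem (Or.inl ⟨i, j, rfl⟩)

private lemma Qmem (i j : ℤ) : InIdeal F (loopVirSminus F)
    (F.alg.mul 1 (F.ι i) (F.ι j) + F.alg.mul 1 (F.ι j) (F.ι i)
      + (2 : ℂ) • F.ι (i + j)) :=
  InIdeal.mem (Or.inr ⟨i, j, rfl⟩)

private lemma Rmem (i j k : ℤ) : InIdeal F (loopVirSminus F)
    (F.alg.mul 1 (F.ι j) (F.alg.mul 1 (F.ι i) (F.ι k))
      + F.alg.mul 1 (F.ι (i + j)) (F.ι k)) := by
  have h := InIdeal.mul_right 2 (F.ι k) (Pmem F i j)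
  have key : F.alg.mul 2
      (F.alg.mul 0 (F.ι i) (F.ι j) + F.alg.mul 1 (F.ι j) (F.alg.D (F.ι i))
        - (2 : ℂ) • F.alg.mul 0 (F.ι j) (F.ι i) + F.alg.D (F.ι (i + j))) (F.ι k)
      = (-2 : ℂ) • (F.alg.mul 1 (F.ι j) (F.alg.mul 1 (F.ι i) (F.ι k))
          + F.alg.mul 1 (F.ι (i + j)) (F.ι k)) := by
    simp only [map_add, map_sub, map_smul, LinearMap.add_apply, LinearMap.sub_apply,
      LinearMap.smul_apply]
    simp only [assoc02 F, assoc12 F, Dmul2 F, Dmul3 F, loc2 F]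
    simp only [map_zero, map_neg, map_smul, smul_zero, neg_zero]
    module
  rw [key] at h
  have h2 := InIdeal.smul ((-2 : ℂ)⁻¹) h
  rw [smul_smul] at h2
  norm_num at h2
  exact h2

private lemma T0mem (j k : ℤ) : InIdeal F (loopVirSminus F)
    (F.alg.mul 1 (F.ι j) (F.ι k) - F.alg.mul 1 (F.ι (j + k)) (F.ι 0)) := by
  have h1 := InIdeal.mul_left 1 (F.ι j) (Qmem F 0 k)
  have h2 := Rmem F 0 j k
  have h3 := Rmem F k j 0
  have h := inIdeal_sub F (inIdeal_sub F h1 h2) h3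
  refine inIdeal_congr F ?_ h
  rw [add_comm k j]
  simp only [zero_add, map_add, map_smul, LinearMap.add_apply, LinearMap.smul_apply]
  module

private lemma s0mem (s : ℤ) : InIdeal F (loopVirSminus F)
    (F.alg.mul 1 (F.ι s) (F.ι 0) + F.ι s) := by
  have h := InIdeal.smul ((2 : ℂ)⁻¹) (inIdeal_sub F (Qmem F s 0) (T0mem F 0 s))
  refine inIdeal_congr F ?_ h
  simp only [add_zero, zero_add, smul_sub, smul_add]
  module

private lemma Bmem (i j : ℤ) : InIdeal F (loopVirSminus F)
    (F.alg.mul 1 (F.ι i) (F.ι j) + F.ι (i + j)) := by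
  have h := (T0mem F i j).add (s0mem F (i + j))
  refine inIdeal_congr F ?_ h
  module

private lemma Pdecomp (i j : ℤ) :
    F.alg.mul 0 (F.ι i) (F.ι j) + F.alg.mul 1 (F.ι j) (F.alg.D (F.ι i))
      - (2 : ℂ) • F.alg.mul 0 (F.ι j) (F.ι i) + F.alg.D (F.ι (i + j))
    = (F.alg.mul 0 (F.ι i) (F.ι j) - F.alg.mul 0 (F.ι j) (F.ι i))
      + F.alg.D (F.alg.mul 1 (F.ι j) (F.ι i) + F.ι (i + j)) := by
  have hL := F.alg.leibniz 1 (F.ι j) (F.ι i)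
  have hD := Dmul1 F (F.ι j) (F.ι i)
  rw [map_add, hL, hD]
  module

private lemma Amem' (i j : ℤ) : InIdeal F (loopVirSminus F)
    (F.alg.mul 0 (F.ι i) (F.ι j) - F.alg.mul 0 (F.ι j) (F.ι i)) := by
  have hp := Pmem F i j
  rw [Pdecomp F i j] at hp
  have hb := InIdeal.deriv (Bmem F j i)
  rw [add_comm j i] at hb
  have h := inIdeal_sub F hp hb
  refine inIdeal_congr F ?_ h
  module

private lemma Vmem (i j k : ℤ) : InIdeal F (loopVirSminus F)
    (F.alg.mul 1 (F.ι i) (F.alg.mul 0 (F.ι j) (F.ι k))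
      - F.alg.mul 0 (F.ι i) (F.alg.mul 1 (F.ι j) (F.ι k))
      + F.alg.mul 0 (F.ι (i + j)) (F.ι k)) := by
  have h := InIdeal.mul_right 0 (F.ι k) (Bmem F i j)
  refine inIdeal_congr F ?_ h
  simp only [map_add, LinearMap.add_apply]
  rw [assoc10 F]

private lemma Wmem (i j k : ℤ) : InIdeal F (loopVirSminus F)
    (F.alg.mul 0 (F.ι (i + j)) (F.ι k) - F.alg.mul 0 (F.ι (i + k)) (F.ι j)) := by
  have h1 := Vmem F i j k
  have h2 := Vmem F i k j
  have h3 := InIdeal.mul_left 1 (F.ι i) (Amem' F j k)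
  have h4 := InIdeal.mul_left 0 (F.ι i) (Bmem F j k)
  have h5 := InIdeal.mul_left 0 (F.ι i) (Bmem F k j)
  have h := inIdeal_sub F (inIdeal_sub F (inIdeal_sub F h1 h2) h3) (inIdeal_sub F h5 h4)
  refine inIdeal_congr F ?_ h
  rw [add_comm k j]
  simp only [map_add, map_sub, LinearMap.add_apply, LinearMap.sub_apply]
  module

private lemma Amem (a b : ℤ) : InIdeal F (loopVirSminus F)
    (F.alg.mul 0 (F.ι a) (F.ι b) - F.alg.mul 0 (F.ι 0) (F.ι (a + b))) := by
  have h := Wmem F (-b) (a + b) b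
  have e1 : -b + (a + b) = a := by ring
  have e2 : -b + b = 0 := by ring
  rw [e1, e2] at h
  exact h

private lemma BmemJ (i j : ℤ) : InIdeal F (loopVirS1 F)
    (F.alg.mul 1 (F.ι i) (F.ι j) + F.ι (i + j)) :=
  InIdeal.mem (Or.inr ⟨i, j, rfl⟩)

private lemma AmemJ' (i j : ℤ) : InIdeal F (loopVirS1 F)
    (F.alg.mul 0 (F.ι i) (F.ι j) - F.alg.mul 0 (F.ι j) (F.ι i)) := by
  rcases eq_or_ne i 0 with rfl | hi
  · rcases eq_or_ne j 0 with rfl | hj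
    · rw [sub_self]; exact .zero
    · have h : InIdeal F (loopVirS1 F)
          (F.alg.mul 0 (F.ι j) (F.ι 0) - F.alg.mul 0 (F.ι 0) (F.ι j)) :=
        InIdeal.mem (Or.inl ⟨j, 0, hj, by rw [add_zero]⟩)
      have h2 := inIdeal_neg F h
      refine inIdeal_congr F ?_ h2
      module
  · rcases eq_or_ne j 0 with rfl | hj
    · exact InIdeal.mem (Or.inl ⟨i, 0, hi, by rw [add_zero]⟩)
    · have h1 : InIdeal F (loopVirS1 F)
          (F.alg.mul 0 (F.ι i) (F.ι j) - F.alg.mul 0 (F.ι 0) (F.ι (i + j))) :=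
        InIdeal.mem (Or.inl ⟨i, j, hi, rfl⟩)
      have h2 : InIdeal F (loopVirS1 F)
          (F.alg.mul 0 (F.ι j) (F.ι i) - F.alg.mul 0 (F.ι 0) (F.ι (i + j))) :=
        InIdeal.mem (Or.inl ⟨j, i, hj, by rw [add_comm j i]⟩)
      have h := inIdeal_sub F h1 h2
      refine inIdeal_congr F ?_ h
      module

private lemma PmemJ (i j : ℤ) : InIdeal F (loopVirS1 F)
    (F.alg.mul 0 (F.ι i) (F.ι j) + F.alg.mul 1 (F.ι j) (F.alg.D (F.ι i))
      - (2 : ℂ) • F.alg.mul 0 (F.ι j) (F.ι i) + F.alg.D (F.ι (i + j))) := by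
  rw [Pdecomp F i j]
  have hb : InIdeal F (loopVirS1 F) (F.alg.mul 1 (F.ι j) (F.ι i) + F.ι (i + j)) :=
    InIdeal.mem (Or.inr ⟨j, i, by rw [add_comm j i]⟩)
  exact (AmemJ' F i j).add hb.deriv

private lemma QmemJ (i j : ℤ) : InIdeal F (loopVirS1 F)
    (F.alg.mul 1 (F.ι i) (F.ι j) + F.alg.mul 1 (F.ι j) (F.ι i)
      + (2 : ℂ) • F.ι (i + j)) := by
  have h1 := BmemJ F i j
  have h2 : InIdeal F (loopVirS1 F) (F.alg.mul 1 (F.ι j) (F.ι i) + F.ι (i + j)) :=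
    InIdeal.mem (Or.inr ⟨j, i, by rw [add_comm j i]⟩)
  have h := h1.add h2
  refine inIdeal_congr F ?_ h
  module

end LoopVir

theorem loopVirasoro_ideals_eq (F : FreeAssocConformal ℂ ℤ 2 C) :
    ∀ x : C, InIdeal F (loopVirS1 F) x ↔ InIdeal F (loopVirSminus F) x := by
  intro x
  constructor
  · refine LoopVir.ideal_mono F ?_
    rintro s (⟨i, j, hi, rfl⟩ | ⟨i, j, rfl⟩)
    · exact LoopVir.Amem F i j
    · exact LoopVir.Bmem F i j
  · refine LoopVir.ideal_mono F ?_
    rintro s (⟨i, j, rfl⟩ | ⟨i, j, rfl⟩)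
    · exact LoopVir.PmemJ F i j
    · exact LoopVir.QmemJ F i j

end LoopVirasoro
end

section
/- Let S be a monic subset of C(B, N) that is closed under the compositions of left multiplication and right multiplication (i.e., all such compositions are trivial modulo S). Then every S-word (any word containing exactly one occurrence of some D^i s with s ∈ S) can be written as a linear combination of normal S-words. -/
/-!  Basic definitions for (associative) conformal algebras, the free
associative conformal algebra `C(B,N)`, normal words, the weight ordering,
normal `S`-words, compositions and Gröbner–Shirshov bases, following
Ni–Chen, "A new Composition-Diamond lemma for associative conformal algebras". -/

universe u v w

open scoped BigOperators

variable {K : Type u} [Field K] {C : Type w} [AddCommGroup C] [Module K C]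

variable {B : Type v} {N : ℕ}

section InvAssoc

variable {K : Type u} [Field K] [CharZero K] {C : Type w} [AddCommGroup C] [Module K C]

theorem alt_choose_sum (n k : ℕ) (hk : k ≤ n) :
    (∑ t ∈ Finset.range (k + 1),
      ((n.choose t : K) * ((-1) ^ (k - t) * ((n - t).choose (k - t) : K))))
      = if k = 0 then (n.choose 0 : K) else 0 := by
  have h1 : ∀ t ∈ Finset.range (k + 1),
      (n.choose t : K) * ((-1) ^ (k - t) * ((n - t).choose (k - t) : K))
      = (n.choose k : K) * ((-1) ^ (k - t) * (k.choose t : K)) := by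
    intro t ht
    rw [Finset.mem_range, Nat.lt_succ_iff] at ht
    have hnat : n.choose k * k.choose t = n.choose t * (n - t).choose (k - t) := Nat.choose_mul ht
    calc (n.choose t : K) * ((-1) ^ (k - t) * ((n - t).choose (k - t) : K))
        = (-1) ^ (k - t) * ((n.choose t * (n - t).choose (k - t) : ℕ) : K) := by
          push_cast; ring
      _ = (-1) ^ (k - t) * ((n.choose k * k.choose t : ℕ) : K) := by rw [← hnat]
      _ = (n.choose k : K) * ((-1) ^ (k - t) * (k.choose t : K)) := by push_cast; ring
  rw [Finset.sum_congr rfl h1, ← Finset.mul_sum]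
  have h2 : (∑ t ∈ Finset.range (k + 1), ((-1 : K) ^ (k - t) * (k.choose t : K)))
      = if k = 0 then 1 else 0 := by
    have hrefl := Finset.sum_range_reflect
      (fun t => ((-1 : K) ^ (k - t) * (k.choose t : K))) (k + 1)
    simp only [Nat.add_sub_cancel] at hrefl
    rw [← hrefl]
    have h3 : ∀ j ∈ Finset.range (k + 1),
        ((-1 : K)) ^ (k - (k - j)) * ((k.choose (k - j)) : K)
        = (-1) ^ j * (k.choose j : K) := by
      intro j hj
      rw [Finset.mem_range, Nat.lt_succ_iff] at hj
      rw [Nat.sub_sub_self hj, Nat.choose_symm hj]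
    rw [Finset.sum_congr rfl h3]
    have h4 := Int.alternating_sum_range_choose (n := k)
    have h5 : ((∑ m ∈ Finset.range (k + 1), ((-1) ^ m * k.choose m : ℤ) : ℤ) : K)
        = ((if k = 0 then (1 : ℤ) else 0 : ℤ) : K) := by rw [h4]
    push_cast at h5
    rw [h5]
  rw [h2]
  split <;> simp_all

theorem invAssoc (A : AssocConformalAlgebra K C) (n m : ℕ) (a b c : C) :
    A.mul n a (A.mul m b c) =
      ∑ t ∈ Finset.range (n + 1),
        ((n.choose t : K)) • A.mul (m + t) (A.mul (n - t) a b) c := by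
  rw [eq_comm]
  calc ∑ t ∈ Finset.range (n + 1),
        ((n.choose t : K)) • A.mul (m + t) (A.mul (n - t) a b) c
      = ∑ t ∈ Finset.range (n + 1), ∑ j ∈ Finset.range (n - t + 1),
          ((n.choose t : K) * ((-1) ^ j * ((n - t).choose j : K))) •
            A.mul (n - (t + j)) a (A.mul (m + (t + j)) b c) := by
        refine Finset.sum_congr rfl fun t ht => ?_
        rw [A.assoc, Finset.smul_sum]
        refine Finset.sum_congr rfl fun j hj => ?_
        rw [smul_smul, Nat.sub_sub, add_assoc]
    _ = ∑ k ∈ Finset.range (n + 1), ∑ t ∈ Finset.range (k + 1),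
          ((n.choose t : K) * ((-1) ^ (k - t) * ((n - t).choose (k - t) : K))) •
            A.mul (n - k) a (A.mul (m + k) b c) := by
        rw [Finset.sum_sigma', Finset.sum_sigma']
        refine Finset.sum_nbij' (fun p => ⟨p.1 + p.2, p.1⟩) (fun p => ⟨p.2, p.1 - p.2⟩)
          ?_ ?_ ?_ ?_ ?_
        · rintro ⟨t, j⟩ hp
          simp only [Finset.mem_sigma, Finset.mem_range, Nat.lt_succ_iff] at hp ⊢
          omega
        · rintro ⟨k, t⟩ hp
          simp only [Finset.mem_sigma, Finset.mem_range, Nat.lt_succ_iff] at hp ⊢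
          omega
        · rintro ⟨t, j⟩ hp
          simp
        · rintro ⟨k, t⟩ hp
          simp only [Finset.mem_sigma, Finset.mem_range, Nat.lt_succ_iff] at hp
          simp [Nat.add_sub_cancel' hp.2]
        · rintro ⟨t, j⟩ hp
          simp
    _ = ∑ k ∈ Finset.range (n + 1),
          (∑ t ∈ Finset.range (k + 1),
            ((n.choose t : K) * ((-1) ^ (k - t) * ((n - t).choose (k - t) : K)))) •
            A.mul (n - k) a (A.mul (m + k) b c) := by
        refine Finset.sum_congr rfl fun k hk => ?_
        rw [Finset.sum_smul]
    _ = A.mul n a (A.mul m b c) := by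
        rw [Finset.sum_congr rfl fun k hk => by
          rw [alt_choose_sum n k (Nat.lt_succ_iff.mp (Finset.mem_range.mp hk))]]
        simp only [ite_smul, zero_smul]
        rw [Finset.sum_ite_eq' (Finset.range (n + 1)) 0]
        simp

end InvAssoc
namespace CDAux

variable {K : Type u} [Field K] [CharZero K]
  {B : Type v} {N : ℕ} {C : Type w} [AddCommGroup C] [Module K C]
  (F : FreeAssocConformal K B N C) (bas : Module.Basis (NormalWord B N) K C)
  (r : B → B → Prop) (S : Set C)

/-- The set of normal `S`-words. -/
def NSset : Set C := {y | ∃ wd, IsNSWord F bas r S y wd}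

/-- The span of normal `S`-words. -/
def G : Submodule K C := Submodule.span K (NSset F bas r S)

variable {F bas r S}

theorem map_span_mem {L : C →ₗ[K] C} {s : Set C} {M : Submodule K C}
    (h : ∀ y ∈ s, L y ∈ M) {x : C} (hx : x ∈ Submodule.span K s) : L x ∈ M := by
  have h2 : Submodule.map L (Submodule.span K s) ≤ M := by
    rw [Submodule.map_span, Submodule.span_le]
    rintro _ ⟨y, hy, rfl⟩
    exact h y hy
  exact h2 ⟨x, hx, rfl⟩

theorem NS_mem_G {y : C} (hy : y ∈ NSset F bas r S) : y ∈ G F bas r S :=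
  Submodule.subset_span hy

theorem NS_prepend {y : C} {wd : NormalWord B N} (h : IsNSWord F bas r S y wd)
    (b : B) (n : ℕ) (hn : n < N) : F.alg.mul n (F.ι b) y ∈ NSset F bas r S := by
  cases h with
  | first p s hs sw hlead hfree m c =>
      exact ⟨_, IsNSWord.first ((b, ⟨n, hn⟩) :: p) s hs sw hlead hfree m c⟩
  | second p s hs sw hlead i =>
      exact ⟨_, IsNSWord.second ((b, ⟨n, hn⟩) :: p) s hs sw hlead i⟩

theorem G_mul_gen_lt {x : C} (hx : x ∈ G F bas r S) (b : B) (n : ℕ) (hn : n < N) :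
    F.alg.mul n (F.ι b) x ∈ G F bas r S := by
  refine map_span_mem (L := F.alg.mul n (F.ι b)) ?_ hx
  rintro y ⟨wd, hy⟩
  exact NS_mem_G (NS_prepend hy b n hn)

theorem trivial_mem_G {h : C} (ht : TrivialMod F bas r S h) : h ∈ G F bas r S := by
  obtain ⟨n, α, g, wd, hsum, hall⟩ := ht
  rw [hsum]
  exact Submodule.sum_mem _ fun i _ =>
    Submodule.smul_mem _ _ (Submodule.subset_span ⟨wd i, (hall i).1⟩)

/-- `s`-front multiplication: `s_(m) y ∈ G` for any `y`. -/
theorem G_smul_s (hbas : ∀ w, bas w = evalWord F w) {s : C} (hs : s ∈ S)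
    {sw : NormalWord B N} (hlead : IsLead bas r s sw) (hfree : sw.exp = 0)
    (m : ℕ) (hm : m < N) (y : C) : F.alg.mul m s y ∈ G F bas r S := by
  have hy : y ∈ Submodule.span K (Set.range bas) := by
    rw [bas.span_eq]; trivial
  refine map_span_mem (L := F.alg.mul m s) ?_ hy
  rintro _ ⟨w, rfl⟩
  rw [hbas w]
  exact Submodule.subset_span
    ⟨_, IsNSWord.first [] s hs sw hlead hfree ⟨m, hm⟩ w⟩

theorem Dpow_succ (L : C →ₗ[K] C) (i : ℕ) (x : C) :
    (L ^ (i + 1)) x = L ((L ^ i) x) := by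
  rw [pow_succ', Module.End.mul_apply]

theorem mul_Dright (A : AssocConformalAlgebra K C) (n : ℕ) (x y : C) :
    A.mul n x (A.D y) = A.D (A.mul n x y) - A.mul n (A.D x) y := by
  rw [A.leibniz]; abel

end CDAux
namespace CDAux

set_option linter.unusedSectionVars false

variable {K : Type u} [Field K] [CharZero K]
  {B : Type v} {N : ℕ} {C : Type w} [AddCommGroup C] [Module K C]
  {F : FreeAssocConformal K B N C} {bas : Module.Basis (NormalWord B N) K C}
  {r : B → B → Prop} {S : Set C}

theorem D_evalAux (p : List (B × Fin N)) (X : C)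
    (hX : ∀ q : List (B × Fin N), evalAux F q X ∈ NSset F bas r S)
    (hDX : F.alg.D X ∈ G F bas r S) :
    F.alg.D (evalAux F p X) ∈ G F bas r S := by
  induction p with
  | nil => exact hDX
  | cons hd tl ih =>
    show F.alg.D (F.alg.mul (hd.2 : ℕ) (F.ι hd.1) (evalAux F tl X)) ∈ _
    rw [F.alg.leibniz]
    refine Submodule.add_mem _ ?_ (G_mul_gen_lt ih hd.1 _ hd.2.2)
    rcases Nat.eq_zero_or_pos (hd.2 : ℕ) with h0 | hpos
    · rw [h0, F.alg.D_mul_zero]; exact Submodule.zero_mem _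
    · rw [F.alg.D_mul _ _ _ hpos]
      refine Submodule.neg_mem _ (Submodule.smul_mem _ _ ?_)
      obtain ⟨wd, hwd⟩ := hX tl
      exact NS_mem_G (NS_prepend hwd hd.1 _ (lt_of_le_of_lt (Nat.sub_le _ _) hd.2.2))

theorem NS_D (hbas : ∀ w, bas w = evalWord F w) {y : C} {wd : NormalWord B N}
    (h : IsNSWord F bas r S y wd) : F.alg.D y ∈ G F bas r S := by
  cases h with
  | first p s hs sw hlead hfree m c =>
    refine D_evalAux p _ (fun q => ⟨_, IsNSWord.first q s hs sw hlead hfree m c⟩) ?_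
    show F.alg.D (F.alg.mul (m : ℕ) s (evalWord F c)) ∈ _
    rw [F.alg.leibniz]
    refine Submodule.add_mem _ ?_ (G_smul_s hbas hs hlead hfree _ m.2 _)
    rcases Nat.eq_zero_or_pos (m : ℕ) with h0 | hpos
    · rw [h0, F.alg.D_mul_zero]; exact Submodule.zero_mem _
    · rw [F.alg.D_mul _ _ _ hpos]
      refine Submodule.neg_mem _ (Submodule.smul_mem _ _ ?_)
      exact NS_mem_G ⟨_, IsNSWord.first [] s hs sw hlead hfree
        ⟨(m : ℕ) - 1, lt_of_le_of_lt (Nat.sub_le _ _) m.2⟩ c⟩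
  | second p s hs sw hlead i =>
    refine D_evalAux p _ (fun q => ⟨_, IsNSWord.second q s hs sw hlead i⟩) ?_
    have hD : F.alg.D ((F.alg.D ^ i) s) = (F.alg.D ^ (i + 1)) s := (Dpow_succ _ _ _).symm
    rw [hD]
    exact NS_mem_G ⟨_, IsNSWord.second [] s hs sw hlead (i + 1)⟩

theorem G_D (hbas : ∀ w, bas w = evalWord F w) {x : C} (hx : x ∈ G F bas r S) :
    F.alg.D x ∈ G F bas r S :=
  map_span_mem (L := F.alg.D) (fun _ hy => NS_D hbas hy.choose_spec) hx

theorem evalWord_dfree_mul_gen (body : List (B × Fin N)) (lst : B) (j : ℕ)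
    (hj : N ≤ j) (b : B) :
    F.alg.mul j (evalAux F body ((F.alg.D ^ 0) (F.ι lst))) (F.ι b) = 0 := by
  induction body generalizing j with
  | nil =>
    show F.alg.mul j ((F.alg.D ^ 0) (F.ι lst)) (F.ι b) = 0
    rw [pow_zero, Module.End.one_apply]
    exact F.loc lst b j hj
  | cons hd tl ih =>
    show F.alg.mul j (F.alg.mul (hd.2 : ℕ) (F.ι hd.1)
      (evalAux F tl ((F.alg.D ^ 0) (F.ι lst)))) (F.ι b) = 0
    rw [F.alg.assoc]
    refine Finset.sum_eq_zero fun t ht => ?_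
    rw [ih (j + t) (le_trans hj (Nat.le_add_right _ _)), map_zero, smul_zero]

theorem dfree_mul_gen_zero (hbas : ∀ w, bas w = evalWord F w) {s : C}
    (hdf : ∀ w, bas.repr s w ≠ 0 → w.exp = 0)
    (b : B) (j : ℕ) (hj : N ≤ j) : F.alg.mul j s (F.ι b) = 0 := by
  have hker : s ∈ LinearMap.ker ((F.alg.mul j).flip (F.ι b)) := by
    refine Submodule.span_le.mpr ?_ (bas.mem_span_repr_support s)
    rintro _ ⟨w, hw, rfl⟩
    have hw' : bas.repr s w ≠ 0 := Finsupp.mem_support_iff.mp hw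
    have he := hdf w hw'
    simp only [SetLike.mem_coe, LinearMap.mem_ker, LinearMap.flip_apply]
    rw [hbas w]
    have h2 : evalWord F w = evalAux F w.body ((F.alg.D ^ 0) (F.ι w.last)) := by
      rw [evalWord, he]
    rw [h2]
    exact evalWord_dfree_mul_gen w.body w.last j hj b
  simpa using hker

theorem s_mul_gen (hbas : ∀ w, bas w = evalWord F w) (hS : MonicSet bas r S)
    (hR : RightMultClosed F bas r S) {s : C} (hs : s ∈ S) (j : ℕ) (b : B) :
    F.alg.mul j s (F.ι b) ∈ G F bas r S := by
  obtain ⟨sw, hlead, -⟩ := hS s hs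
  by_cases hexp : sw.exp = 0
  · by_cases hj : j < N
    · have heq : F.alg.mul j s (F.ι b)
          = evalAux F [] (F.alg.mul ((⟨j, hj⟩ : Fin N) : ℕ) s (evalWord F ⟨[], b, 0⟩)) := by
        show _ = F.alg.mul j s (evalAux F [] ((F.alg.D ^ 0) (F.ι b)))
        rw [show evalAux F [] ((F.alg.D ^ 0) (F.ι b)) = (F.alg.D ^ 0) (F.ι b) from rfl,
          pow_zero, Module.End.one_apply]
      rw [heq]
      exact NS_mem_G ⟨_, IsNSWord.first [] s hs sw hlead hexp ⟨j, hj⟩ ⟨[], b, 0⟩⟩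
    · by_cases hdf : NotDFree bas s
      · exact trivial_mem_G (hR s hs b j (Or.inr ⟨hdf, le_of_not_gt hj⟩))
      · have hall : ∀ w, bas.repr s w ≠ 0 → w.exp = 0 := by
          intro w hw
          by_contra hne
          exact hdf ⟨w, hw, hne⟩
        rw [dfree_mul_gen_zero hbas hall b j (le_of_not_gt hj)]
        exact Submodule.zero_mem _
  · by_cases hj : j < N
    · exact trivial_mem_G (hR s hs b j (Or.inl ⟨⟨sw, hlead, hexp⟩, hj⟩))
    · exact trivial_mem_G
        (hR s hs b j (Or.inr ⟨⟨sw, hlead.1, hexp⟩, le_of_not_gt hj⟩))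

theorem sDpow_mul_gen (hbas : ∀ w, bas w = evalWord F w) (hS : MonicSet bas r S)
    (hR : RightMultClosed F bas r S) {s : C} (hs : s ∈ S) (i : ℕ) :
    ∀ (j : ℕ) (b : B), F.alg.mul j ((F.alg.D ^ i) s) (F.ι b) ∈ G F bas r S := by
  induction i with
  | zero =>
    intro j b
    rw [pow_zero, Module.End.one_apply]
    exact s_mul_gen hbas hS hR hs j b
  | succ i ih =>
    intro j b
    rw [Dpow_succ]
    rcases Nat.eq_zero_or_pos j with h0 | hpos
    · rw [h0, F.alg.D_mul_zero]; exact Submodule.zero_mem _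
    · rw [F.alg.D_mul _ _ _ hpos]
      exact Submodule.neg_mem _ (Submodule.smul_mem _ _ (ih (j - 1) b))

theorem evalAux_mul_gen (p : List (B × Fin N)) (X : C)
    (hX : ∀ (j : ℕ) (b : B), F.alg.mul j X (F.ι b) ∈ G F bas r S) :
    ∀ (j : ℕ) (b : B), F.alg.mul j (evalAux F p X) (F.ι b) ∈ G F bas r S := by
  induction p with
  | nil => exact hX
  | cons hd tl ih =>
    intro j b
    show F.alg.mul j (F.alg.mul (hd.2 : ℕ) (F.ι hd.1) (evalAux F tl X)) (F.ι b) ∈ _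
    rw [F.alg.assoc]
    refine Submodule.sum_mem _ fun t ht => Submodule.smul_mem _ _ ?_
    exact G_mul_gen_lt (ih (j + t) b) hd.1 _ (lt_of_le_of_lt (Nat.sub_le _ _) hd.2.2)

theorem NS_mul_gen (hbas : ∀ w, bas w = evalWord F w) (hS : MonicSet bas r S)
    (hR : RightMultClosed F bas r S) {y : C} {wd : NormalWord B N}
    (h : IsNSWord F bas r S y wd) (j : ℕ) (b : B) :
    F.alg.mul j y (F.ι b) ∈ G F bas r S := by
  cases h with
  | first p s hs sw hlead hfree m c =>
    refine evalAux_mul_gen p _ ?_ j b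
    intro j' b'
    show F.alg.mul j' (F.alg.mul (m : ℕ) s (evalWord F c)) (F.ι b') ∈ _
    rw [F.alg.assoc]
    refine Submodule.sum_mem _ fun t ht => Submodule.smul_mem _ _ ?_
    exact G_smul_s hbas hs hlead hfree _ (lt_of_le_of_lt (Nat.sub_le _ _) m.2) _
  | second p s hs sw hlead i =>
    exact evalAux_mul_gen p _ (fun j' b' => sDpow_mul_gen hbas hS hR hs i j' b') j b

theorem G_mul_gen_right (hbas : ∀ w, bas w = evalWord F w) (hS : MonicSet bas r S)
    (hR : RightMultClosed F bas r S) {x : C} (hx : x ∈ G F bas r S) (j : ℕ) (b : B) :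
    F.alg.mul j x (F.ι b) ∈ G F bas r S :=
  map_span_mem (L := (F.alg.mul j).flip (F.ι b))
    (fun _ hy => NS_mul_gen hbas hS hR hy.choose_spec j b) hx

theorem G_mul_Dgen_right (hbas : ∀ w, bas w = evalWord F w) (hS : MonicSet bas r S)
    (hR : RightMultClosed F bas r S) (b : B) (e : ℕ) :
    ∀ (j : ℕ) {x : C}, x ∈ G F bas r S →
      F.alg.mul j x ((F.alg.D ^ e) (F.ι b)) ∈ G F bas r S := by
  induction e with
  | zero =>
    intro j x hx
    rw [pow_zero, Module.End.one_apply]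
    exact G_mul_gen_right hbas hS hR hx j b
  | succ e ih =>
    intro j x hx
    rw [Dpow_succ, mul_Dright]
    refine Submodule.sub_mem _ (G_D hbas (ih j hx)) ?_
    rcases Nat.eq_zero_or_pos j with h0 | hpos
    · rw [h0, F.alg.D_mul_zero]; exact Submodule.zero_mem _
    · rw [F.alg.D_mul _ _ _ hpos]
      exact Submodule.neg_mem _ (Submodule.smul_mem _ _ (ih (j - 1) hx))

theorem G_mul_word_right' (hbas : ∀ w, bas w = evalWord F w) (hS : MonicSet bas r S)
    (hR : RightMultClosed F bas r S) (body : List (B × Fin N)) (lst : B) (e : ℕ) :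
    ∀ (j : ℕ) {x : C}, x ∈ G F bas r S →
      F.alg.mul j x (evalAux F body ((F.alg.D ^ e) (F.ι lst))) ∈ G F bas r S := by
  induction body with
  | nil => exact G_mul_Dgen_right hbas hS hR lst e
  | cons hd tl ih =>
    intro j x hx
    show F.alg.mul j x (F.alg.mul (hd.2 : ℕ) (F.ι hd.1)
      (evalAux F tl ((F.alg.D ^ e) (F.ι lst)))) ∈ _
    rw [invAssoc]
    refine Submodule.sum_mem _ fun t ht => Submodule.smul_mem _ _ ?_
    exact ih _ (G_mul_gen_right hbas hS hR hx (j - t) hd.1)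

theorem G_mul_word_right (hbas : ∀ w, bas w = evalWord F w) (hS : MonicSet bas r S)
    (hR : RightMultClosed F bas r S) (j : ℕ) (c : NormalWord B N) {x : C}
    (hx : x ∈ G F bas r S) : F.alg.mul j x (evalWord F c) ∈ G F bas r S :=
  G_mul_word_right' hbas hS hR c.body c.last c.exp j hx

end CDAux
namespace CDAux

variable {K : Type u} [Field K] [CharZero K]
  {B : Type v} {N : ℕ} {C : Type w} [AddCommGroup C] [Module K C]
  {F : FreeAssocConformal K B N C} {bas : Module.Basis (NormalWord B N) K C}
  {r : B → B → Prop} {S : Set C}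

theorem gen_mul_s (hS : MonicSet bas r S) (hL : LeftMultClosed F bas r S)
    {s : C} (hs : s ∈ S) (n : ℕ) (b : B) :
    F.alg.mul n (F.ι b) s ∈ G F bas r S := by
  by_cases hn : n < N
  · obtain ⟨sw, hlead, -⟩ := hS s hs
    have heq : F.alg.mul n (F.ι b) s = evalAux F [(b, ⟨n, hn⟩)] ((F.alg.D ^ 0) s) := by
      show F.alg.mul n (F.ι b) s = F.alg.mul n (F.ι b) ((F.alg.D ^ 0) s)
      rw [pow_zero, Module.End.one_apply]
    rw [heq]
    exact NS_mem_G ⟨_, IsNSWord.second [(b, ⟨n, hn⟩)] s hs sw hlead 0⟩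
  · exact trivial_mem_G (hL s hs b n (le_of_not_gt hn))

theorem gen_mul_sDpow (hbas : ∀ w, bas w = evalWord F w) (hS : MonicSet bas r S)
    (hL : LeftMultClosed F bas r S) {s : C} (hs : s ∈ S) (i : ℕ) :
    ∀ (n : ℕ) (b : B), F.alg.mul n (F.ι b) ((F.alg.D ^ i) s) ∈ G F bas r S := by
  induction i with
  | zero =>
    intro n b
    rw [pow_zero, Module.End.one_apply]
    exact gen_mul_s hS hL hs n b
  | succ i ih =>
    intro n b
    rw [Dpow_succ, mul_Dright]
    refine Submodule.sub_mem _ (G_D hbas (ih n b)) ?_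
    rcases Nat.eq_zero_or_pos n with h0 | hpos
    · rw [h0, F.alg.D_mul_zero]; exact Submodule.zero_mem _
    · rw [F.alg.D_mul _ _ _ hpos]
      exact Submodule.neg_mem _ (Submodule.smul_mem _ _ (ih (n - 1) b))

theorem gen_mul_core1 (hbas : ∀ w, bas w = evalWord F w) (hS : MonicSet bas r S)
    (hL : LeftMultClosed F bas r S) (hR : RightMultClosed F bas r S)
    {s : C} (hs : s ∈ S) (m : ℕ) (c : NormalWord B N) (n : ℕ) (b : B) :
    F.alg.mul n (F.ι b) (F.alg.mul m s (evalWord F c)) ∈ G F bas r S := by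
  rw [invAssoc]
  refine Submodule.sum_mem _ fun t ht => Submodule.smul_mem _ _ ?_
  exact G_mul_word_right hbas hS hR _ c (gen_mul_s hS hL hs (n - t) b)

theorem gen_mul_evalAux (hbas : ∀ w, bas w = evalWord F w)
    (p : List (B × Fin N)) (X : C)
    (hcore : ∀ (n : ℕ) (b : B), F.alg.mul n (F.ι b) X ∈ G F bas r S) :
    ∀ (n : ℕ) (b : B), F.alg.mul n (F.ι b) (evalAux F p X) ∈ G F bas r S := by
  induction p with
  | nil => exact hcore
  | cons hd tl ih =>
    intro n b
    show F.alg.mul n (F.ι b) (F.alg.mul (hd.2 : ℕ) (F.ι hd.1) (evalAux F tl X)) ∈ _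
    rw [invAssoc]
    refine Submodule.sum_mem _ fun t ht => Submodule.smul_mem _ _ ?_
    by_cases hnt : n - t < N
    · rw [F.alg.assoc]
      refine Submodule.sum_mem _ fun u hu => Submodule.smul_mem _ _ ?_
      exact G_mul_gen_lt (ih ((hd.2 : ℕ) + t + u) hd.1) b _
        (lt_of_le_of_lt (Nat.sub_le _ _) hnt)
    · rw [F.loc b hd.1 _ (le_of_not_gt hnt), map_zero]
      show (0 : C →ₗ[K] C) _ ∈ _
      rw [LinearMap.zero_apply]
      exact Submodule.zero_mem _

theorem NS_gen_mul (hbas : ∀ w, bas w = evalWord F w) (hS : MonicSet bas r S)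
    (hL : LeftMultClosed F bas r S) (hR : RightMultClosed F bas r S)
    {y : C} {wd : NormalWord B N} (h : IsNSWord F bas r S y wd) (n : ℕ) (b : B) :
    F.alg.mul n (F.ι b) y ∈ G F bas r S := by
  cases h with
  | first p s hs sw hlead hfree m c =>
    exact gen_mul_evalAux hbas p _
      (fun n' b' => gen_mul_core1 hbas hS hL hR hs (m : ℕ) c n' b') n b
  | second p s hs sw hlead i =>
    exact gen_mul_evalAux hbas p _
      (fun n' b' => gen_mul_sDpow hbas hS hL hs i n' b') n b

theorem G_gen_mul (hbas : ∀ w, bas w = evalWord F w) (hS : MonicSet bas r S)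
    (hL : LeftMultClosed F bas r S) (hR : RightMultClosed F bas r S)
    {x : C} (hx : x ∈ G F bas r S) (n : ℕ) (b : B) :
    F.alg.mul n (F.ι b) x ∈ G F bas r S :=
  map_span_mem (L := F.alg.mul n (F.ι b))
    (fun _ hy => NS_gen_mul hbas hS hL hR hy.choose_spec n b) hx

theorem G_Dgen_mul (hbas : ∀ w, bas w = evalWord F w) (hS : MonicSet bas r S)
    (hL : LeftMultClosed F bas r S) (hR : RightMultClosed F bas r S)
    (b : B) (e : ℕ) :
    ∀ (n : ℕ) {x : C}, x ∈ G F bas r S →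
      F.alg.mul n ((F.alg.D ^ e) (F.ι b)) x ∈ G F bas r S := by
  induction e with
  | zero =>
    intro n x hx
    rw [pow_zero, Module.End.one_apply]
    exact G_gen_mul hbas hS hL hR hx n b
  | succ e ih =>
    intro n x hx
    rw [Dpow_succ]
    rcases Nat.eq_zero_or_pos n with h0 | hpos
    · rw [h0, F.alg.D_mul_zero]; exact Submodule.zero_mem _
    · rw [F.alg.D_mul _ _ _ hpos]
      exact Submodule.neg_mem _ (Submodule.smul_mem _ _ (ih (n - 1) hx))

theorem G_cword_mul (hbas : ∀ w, bas w = evalWord F w) (hS : MonicSet bas r S)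
    (hL : LeftMultClosed F bas r S) (hR : RightMultClosed F bas r S)
    (v : CWord B) :
    ∀ (n : ℕ) {x : C}, x ∈ G F bas r S →
      F.alg.mul n (evalCWord F v) x ∈ G F bas r S := by
  induction v with
  | gen b i => exact G_Dgen_mul hbas hS hL hR b i
  | mul k u w ihu ihw =>
    intro n x hx
    show F.alg.mul n (F.alg.mul k (evalCWord F u) (evalCWord F w)) x ∈ _
    rw [F.alg.assoc]
    refine Submodule.sum_mem _ fun t ht => Submodule.smul_mem _ _ ?_
    exact ihu _ (ihw _ hx)

theorem G_mul_cword (hbas : ∀ w, bas w = evalWord F w) (hS : MonicSet bas r S)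
    (hL : LeftMultClosed F bas r S) (hR : RightMultClosed F bas r S)
    (v : CWord B) :
    ∀ (n : ℕ) {x : C}, x ∈ G F bas r S →
      F.alg.mul n x (evalCWord F v) ∈ G F bas r S := by
  induction v with
  | gen b i =>
    intro n x hx
    exact G_mul_Dgen_right hbas hS hR b i n hx
  | mul k u w ihu ihw =>
    intro n x hx
    show F.alg.mul n x (F.alg.mul k (evalCWord F u) (evalCWord F w)) ∈ _
    rw [invAssoc]
    refine Submodule.sum_mem _ fun t ht => Submodule.smul_mem _ _ ?_
    exact ihw _ (ihu _ hx)

end CDAux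
theorem SWord_eq_lin_comb_normal_SWords {K : Type u} [Field K] [CharZero K]
    {B : Type v} {N : ℕ} {C : Type w} [AddCommGroup C] [Module K C]
    (F : FreeAssocConformal K B N C) (bas : Module.Basis (NormalWord B N) K C)
    (hbas : ∀ w, bas w = evalWord F w)
    (r : B → B → Prop) (hr : IsWellOrder B r)
    (S : Set C) (hS : MonicSet bas r S)
    (hL : LeftMultClosed F bas r S) (hR : RightMultClosed F bas r S)
    (x : C) (hx : IsSWord F S x) :
    ∃ (n : ℕ) (α : Fin n → K) (g : Fin n → C) (wd : Fin n → NormalWord B N),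
      x = ∑ i, α i • g i ∧ ∀ i, IsNSWord F bas r S (g i) (wd i) := by
  have hG : x ∈ CDAux.G F bas r S := by
    induction hx with
    | base hs i =>
      obtain ⟨sw, hlead, -⟩ := hS _ hs
      exact CDAux.NS_mem_G ⟨_, IsNSWord.second [] _ hs sw hlead i⟩
    | mul_right hu v m ih => exact CDAux.G_mul_cword hbas hS hL hR v m ih
    | mul_left hu v m ih => exact CDAux.G_cword_mul hbas hS hL hR v m ih
  obtain ⟨n, f, g, hsum⟩ := Submodule.mem_span_set'.mp hG
  exact ⟨n, f, fun i => (g i : C), fun i => (g i).2.choose,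
    hsum.symm, fun i => (g i).2.choose_spec⟩
end
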